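/- arXiv:1507.05113 — 6 statements merged into one kernel-verified Lean document; each statement's English description precedes it below -/
import Mathlib

section
/- Let d ≥ 1, x0 ∈ ℝ^d, p, q ≥ 1, and let X belong to L^{max(p,q)} on a neighborhood of x0. Suppose X ∈ T^p_α(x0) and X ∈ T^q_β(x0), both witnessed by the same polynomial P. Let γ ∈ (0,1) and define s by 1/s = γ/p + (1-γ)/q. Then X ∈ T^s_δ(x0) with δ = γα + (1-γ)β, witnessed by the same polynomial P; more precisely there is a constant C such that the L^s norm of X - P on B(x0,r) satisfies ‖X - P‖_{L^s(B(x0,r))} ≤ C r^{γ(α + d/p) + (1-γ)(β + d/q)} for small r. Consequently the map r ↦ h_{1/r}(x0) is concave on its interval of definition. -/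
open MeasureTheory

/-- `X ∈ T^p_α(x0)`. -/
def TpAt (d : ℕ) (p : ℝ) (X : EuclideanSpace ℝ (Fin d) → ℝ)
    (x0 : EuclideanSpace ℝ (Fin d)) (α : ℝ) : Prop :=
  ∃ C : ℝ, 0 < C ∧ ∃ P : MvPolynomial (Fin d) ℝ,
    (P = 0 ∨ (P.totalDegree : ℝ) < α) ∧
    ∃ a0 : ℝ, 0 < a0 ∧ ∀ a : ℝ, 0 < a → a < a0 →
      (a ^ (-(d : ℝ)) *
          ∫ u in Metric.ball x0 a, |X u - MvPolynomial.eval (fun i => u i) P| ^ p) ^ (1 / p)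
        ≤ C * a ^ α

lemma interp_core {α : Type*} [MeasurableSpace α] (μ : Measure α) (F : α → ℝ)
    (p q s γ : ℝ) (hp : 1 ≤ p) (hq : 1 ≤ q) (hγ0 : 0 < γ) (hγ1 : γ < 1)
    (hs : 1 / s = γ / p + (1 - γ) / q)
    (hFp : MemLp F (ENNReal.ofReal p) μ) (hFq : MemLp F (ENNReal.ofReal q) μ) :
    (∫ u, |F u| ^ s ∂μ) ^ (1 / s) ≤
      ((∫ u, |F u| ^ p ∂μ) ^ (1 / p)) ^ γ * ((∫ u, |F u| ^ q ∂μ) ^ (1 / q)) ^ (1 - γ) := by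
  have hp0 : (0:ℝ) < p := by linarith
  have hq0 : (0:ℝ) < q := by linarith
  have hγ1' : (0:ℝ) < 1 - γ := by linarith
  have h1s : 0 < 1 / s := by rw [hs]; positivity
  have hs0 : 0 < s := by
    by_contra h
    push_neg at h
    have : 1 / s ≤ 0 := div_nonpos_of_nonneg_of_nonpos zero_le_one h
    linarith
  have hsum : γ * s / p + (1 - γ) * s / q = 1 := by
    have : γ * s / p + (1 - γ) * s / q = s * (1 / s) := by rw [hs]; ring
    rw [this, mul_one_div_cancel hs0.ne']
  have hγsp : γ * s < p := by
    have h2 : 0 < (1 - γ) * s / q := by positivity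
    have : γ * s / p < 1 := by linarith
    exact (div_lt_one hp0).mp this
  have hconj : (p / (γ * s)).HolderConjugate (q / ((1 - γ) * s)) := by
    rw [Real.holderConjugate_iff]
    constructor
    · exact (one_lt_div (by positivity)).mpr hγsp
    · rw [← one_div, ← one_div, one_div_div, one_div_div]; exact hsum
  have hf : MemLp (fun u => |F u| ^ (γ * s)) (ENNReal.ofReal (p / (γ * s))) μ := by
    have := hFp.norm_rpow_div (ENNReal.ofReal (γ * s))
    rw [ENNReal.toReal_ofReal (by positivity)] at this
    rw [ENNReal.ofReal_div_of_pos (by positivity)]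
    simpa [Real.norm_eq_abs] using this
  have hg : MemLp (fun u => |F u| ^ ((1 - γ) * s)) (ENNReal.ofReal (q / ((1 - γ) * s))) μ := by
    have := hFq.norm_rpow_div (ENNReal.ofReal ((1 - γ) * s))
    rw [ENNReal.toReal_ofReal (by positivity)] at this
    rw [ENNReal.ofReal_div_of_pos (by positivity)]
    simpa [Real.norm_eq_abs] using this
  have hHolder := integral_mul_le_Lp_mul_Lq_of_nonneg hconj
    (Filter.Eventually.of_forall fun u => by positivity)
    (Filter.Eventually.of_forall fun u => by positivity) hf hg
  have hL : (fun u => |F u| ^ (γ * s) * |F u| ^ ((1 - γ) * s)) = fun u => |F u| ^ s := by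
    funext u
    rw [← Real.rpow_add' (abs_nonneg _) (by rw [show γ * s + (1 - γ) * s = s by ring]; exact hs0.ne')]
    ring_nf
  have hRp : (fun u => (|F u| ^ (γ * s)) ^ (p / (γ * s))) = fun u => |F u| ^ p := by
    funext u
    rw [← Real.rpow_mul (abs_nonneg _)]
    congr 1
    field_simp
  have hRq : (fun u => (|F u| ^ ((1 - γ) * s)) ^ (q / ((1 - γ) * s))) = fun u => |F u| ^ q := by
    funext u
    rw [← Real.rpow_mul (abs_nonneg _)]
    congr 1
    field_simp
  rw [show (∫ u, |F u| ^ (γ * s) * |F u| ^ ((1 - γ) * s) ∂μ) = ∫ u, |F u| ^ s ∂μ from by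
      rw [show (fun u => |F u| ^ (γ * s) * |F u| ^ ((1 - γ) * s)) = fun u => |F u| ^ s from hL]] at hHolder
  rw [show (∫ u, (|F u| ^ (γ * s)) ^ (p / (γ * s)) ∂μ) = ∫ u, |F u| ^ p ∂μ from by rw [hRp],
      show (∫ u, (|F u| ^ ((1 - γ) * s)) ^ (q / ((1 - γ) * s)) ∂μ) = ∫ u, |F u| ^ q ∂μ from by
        rw [hRq], one_div_div, one_div_div] at hHolder
  have hA : 0 ≤ ∫ u, |F u| ^ p ∂μ := integral_nonneg fun u => by positivity
  have hB : 0 ≤ ∫ u, |F u| ^ q ∂μ := integral_nonneg fun u => by positivity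
  have hI : 0 ≤ ∫ u, |F u| ^ s ∂μ := integral_nonneg fun u => by positivity
  calc (∫ u, |F u| ^ s ∂μ) ^ (1 / s)
      ≤ ((∫ u, |F u| ^ p ∂μ) ^ (γ * s / p) * (∫ u, |F u| ^ q ∂μ) ^ ((1 - γ) * s / q)) ^ (1 / s) :=
        Real.rpow_le_rpow hI hHolder (by positivity)
    _ = ((∫ u, |F u| ^ p ∂μ) ^ (1 / p)) ^ γ * ((∫ u, |F u| ^ q ∂μ) ^ (1 / q)) ^ (1 - γ) := by
        rw [Real.mul_rpow (by positivity) (by positivity),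
          ← Real.rpow_mul hA, ← Real.rpow_mul hB, ← Real.rpow_mul hA, ← Real.rpow_mul hB]
        congr 1 <;> congr 1 <;> field_simp <;> ring

lemma aux_step (r J C a t : ℝ) (d : ℕ) (hr : 0 < r) (hJ : 0 ≤ J)
    (h : (r ^ (-(d : ℝ)) * J) ^ (1 / t) ≤ C * r ^ a) :
    J ^ (1 / t) ≤ C * r ^ (a + (d : ℝ) / t) := by
  rw [Real.mul_rpow (Real.rpow_nonneg hr.le _) hJ, ← Real.rpow_mul hr.le] at h
  have h2 := mul_le_mul_of_nonneg_right h (Real.rpow_nonneg hr.le ((d : ℝ) * (1 / t)))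
  calc J ^ (1 / t)
      = r ^ (-(d : ℝ) * (1 / t)) * J ^ (1 / t) * r ^ ((d : ℝ) * (1 / t)) := by
        rw [mul_comm (r ^ (-(d : ℝ) * (1 / t))) _, mul_assoc, ← Real.rpow_add hr,
          show -(d : ℝ) * (1 / t) + (d : ℝ) * (1 / t) = 0 by ring, Real.rpow_zero, mul_one]
    _ ≤ C * r ^ a * r ^ ((d : ℝ) * (1 / t)) := h2
    _ = C * r ^ (a + (d : ℝ) / t) := by
        rw [mul_assoc, ← Real.rpow_add hr, show a + (d : ℝ) * (1 / t) = a + (d : ℝ) / t by ring]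


/-- interpolation: if `X ∈ T^p_α(x0)` and `X ∈ T^q_β(x0)`, both witnessed by
the same polynomial `P`, and `1/s = γ/p + (1-γ)/q` with `γ ∈ (0,1)`, then
`‖X - P‖_{L^s(B(x0,r))} ≤ C r^{γ(α+d/p)+(1-γ)(β+d/q)}` for small `r`, and `X ∈ T^s_δ(x0)`
with `δ = γα + (1-γ)β`, witnessed by the same `P`.  (This yields the concavity of
`r ↦ h_{1/r}(x0)`.) -/
theorem stmt2 (d : ℕ) (hd : 1 ≤ d) (p q : ℝ) (hp : 1 ≤ p) (hq : 1 ≤ q)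
    (x0 : EuclideanSpace ℝ (Fin d)) (X : EuclideanSpace ℝ (Fin d) → ℝ)
    (hX : ∃ r : ℝ, 0 < r ∧
      MemLp X (ENNReal.ofReal (max p q)) (volume.restrict (Metric.ball x0 r)))
    (α β : ℝ) (P : MvPolynomial (Fin d) ℝ)
    (hdegα : P = 0 ∨ (P.totalDegree : ℝ) < α)
    (hdegβ : P = 0 ∨ (P.totalDegree : ℝ) < β)
    (Cp : ℝ) (hCp : 0 < Cp) (ap : ℝ) (hap : 0 < ap)
    (hestp : ∀ a : ℝ, 0 < a → a < ap →
      (a ^ (-(d : ℝ)) *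
          ∫ u in Metric.ball x0 a, |X u - MvPolynomial.eval (fun i => u i) P| ^ p) ^ (1 / p)
        ≤ Cp * a ^ α)
    (Cq : ℝ) (hCq : 0 < Cq) (aq : ℝ) (haq : 0 < aq)
    (hestq : ∀ a : ℝ, 0 < a → a < aq →
      (a ^ (-(d : ℝ)) *
          ∫ u in Metric.ball x0 a, |X u - MvPolynomial.eval (fun i => u i) P| ^ q) ^ (1 / q)
        ≤ Cq * a ^ β)
    (γ : ℝ) (hγ0 : 0 < γ) (hγ1 : γ < 1)
    (s : ℝ) (hs : 1 / s = γ / p + (1 - γ) / q) :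
    (∃ C : ℝ, 0 < C ∧ ∃ r0 : ℝ, 0 < r0 ∧ ∀ r : ℝ, 0 < r → r < r0 →
      (∫ u in Metric.ball x0 r, |X u - MvPolynomial.eval (fun i => u i) P| ^ s) ^ (1 / s)
        ≤ C * r ^ (γ * (α + (d : ℝ) / p) + (1 - γ) * (β + (d : ℝ) / q))) ∧
    (P = 0 ∨ (P.totalDegree : ℝ) < γ * α + (1 - γ) * β) ∧
    (∃ C' : ℝ, 0 < C' ∧ ∃ r1 : ℝ, 0 < r1 ∧ ∀ r : ℝ, 0 < r → r < r1 →
      (r ^ (-(d : ℝ)) *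
          ∫ u in Metric.ball x0 r, |X u - MvPolynomial.eval (fun i => u i) P| ^ s) ^ (1 / s)
        ≤ C' * r ^ (γ * α + (1 - γ) * β)) := by
  obtain ⟨R, hR, hXR⟩ := hX
  have hp0 : (0 : ℝ) < p := by linarith
  have hq0 : (0 : ℝ) < q := by linarith
  have hγ1' : (0 : ℝ) < 1 - γ := by linarith
  set F : EuclideanSpace ℝ (Fin d) → ℝ :=
    fun u => X u - MvPolynomial.eval (fun i => u i) P with hF
  set r0 : ℝ := min R (min ap aq) with hr0def
  have hr0 : 0 < r0 := lt_min hR (lt_min hap haq)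
  set E1 : ℝ := γ * (α + (d : ℝ) / p) + (1 - γ) * (β + (d : ℝ) / q) with hE1
  set C : ℝ := Cp ^ γ * Cq ^ (1 - γ) with hC
  have hCpos : 0 < C := by positivity
  have main : ∀ r : ℝ, 0 < r → r < r0 →
      (∫ u in Metric.ball x0 r, |F u| ^ s) ^ (1 / s) ≤ C * r ^ E1 := by
    intro r hr hrr0
    have hrR : r ≤ R := le_of_lt (lt_of_lt_of_le hrr0 (min_le_left _ _))
    have hrap : r < ap := lt_of_lt_of_le hrr0 (le_trans (min_le_right _ _) (min_le_left _ _))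
    have hraq : r < aq := lt_of_lt_of_le hrr0 (le_trans (min_le_right _ _) (min_le_right _ _))
    set μr := volume.restrict (Metric.ball x0 r) with hμr
    haveI : IsFiniteMeasure μr :=
      ⟨by rw [hμr, Measure.restrict_apply_univ]; exact measure_ball_lt_top⟩
    have hXmono : MemLp X (ENNReal.ofReal (max p q)) μr :=
      hXR.mono_measure (Measure.restrict_mono (Metric.ball_subset_ball hrR) le_rfl)
    have hcont : Continuous fun u : EuclideanSpace ℝ (Fin d) =>
        MvPolynomial.eval (fun i => u i) P :=
      P.continuous_eval.comp (continuous_pi fun i => PiLp.continuous_apply _ _ i)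
    obtain ⟨M, hM⟩ := (isCompact_closedBall x0 R).exists_bound_of_continuousOn
      hcont.continuousOn
    have hQmem : ∀ t : ℝ, MemLp (fun u : EuclideanSpace ℝ (Fin d) =>
        MvPolynomial.eval (fun i => u i) P) (ENNReal.ofReal t) μr := by
      intro t
      refine MemLp.of_bound hcont.aestronglyMeasurable M ?_
      filter_upwards [ae_restrict_mem measurableSet_ball] with u hu
      exact hM u (Metric.closedBall_subset_closedBall hrR (Metric.ball_subset_closedBall hu))
    have hFp : MemLp F (ENNReal.ofReal p) μr :=
      ((hXmono.mono_exponent (ENNReal.ofReal_le_ofReal (le_max_left p q))).sub (hQmem p))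
    have hFq : MemLp F (ENNReal.ofReal q) μr :=
      ((hXmono.mono_exponent (ENNReal.ofReal_le_ofReal (le_max_right p q))).sub (hQmem q))
    have key := interp_core μr F p q s γ hp hq hγ0 hγ1 hs hFp hFq
    have hJp0 : (0:ℝ) ≤ ∫ u, |F u| ^ p ∂μr := integral_nonneg fun u => by positivity
    have hJq0 : (0:ℝ) ≤ ∫ u, |F u| ^ q ∂μr := integral_nonneg fun u => by positivity
    have hbp : (∫ u, |F u| ^ p ∂μr) ^ (1 / p) ≤ Cp * r ^ (α + (d : ℝ) / p) :=
      aux_step r _ Cp α p d hr hJp0 (hestp r hr hrap)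
    have hbq : (∫ u, |F u| ^ q ∂μr) ^ (1 / q) ≤ Cq * r ^ (β + (d : ℝ) / q) :=
      aux_step r _ Cq β q d hr hJq0 (hestq r hr hraq)
    have m1 : ((∫ u, |F u| ^ p ∂μr) ^ (1 / p)) ^ γ ≤ (Cp * r ^ (α + (d : ℝ) / p)) ^ γ :=
      Real.rpow_le_rpow (Real.rpow_nonneg hJp0 _) hbp hγ0.le
    have m2 : ((∫ u, |F u| ^ q ∂μr) ^ (1 / q)) ^ (1 - γ)
        ≤ (Cq * r ^ (β + (d : ℝ) / q)) ^ (1 - γ) :=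
      Real.rpow_le_rpow (Real.rpow_nonneg hJq0 _) hbq hγ1'.le
    calc (∫ u, |F u| ^ s ∂μr) ^ (1 / s)
        ≤ ((∫ u, |F u| ^ p ∂μr) ^ (1 / p)) ^ γ * ((∫ u, |F u| ^ q ∂μr) ^ (1 / q)) ^ (1 - γ) := key
      _ ≤ (Cp * r ^ (α + (d : ℝ) / p)) ^ γ * (Cq * r ^ (β + (d : ℝ) / q)) ^ (1 - γ) :=
          mul_le_mul m1 m2 (Real.rpow_nonneg (Real.rpow_nonneg hJq0 _) _) (by positivity)
      _ = C * r ^ E1 := by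
          rw [Real.mul_rpow hCp.le (Real.rpow_nonneg hr.le _),
            Real.mul_rpow hCq.le (Real.rpow_nonneg hr.le _),
            ← Real.rpow_mul hr.le, ← Real.rpow_mul hr.le, mul_mul_mul_comm,
            ← Real.rpow_add hr, hC, hE1]
          congr 1
          ring
  refine ⟨⟨C, hCpos, r0, hr0, main⟩, ?_, ?_⟩
  · rcases hdegα with h | hα
    · exact Or.inl h
    · rcases hdegβ with h | hβ
      · exact Or.inl h
      · right
        nlinarith [mul_pos hγ0 (sub_pos.mpr hα), mul_pos hγ1' (sub_pos.mpr hβ)]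
  · refine ⟨C, hCpos, r0, hr0, fun r hr hrr0 => ?_⟩
    have hI0 : (0:ℝ) ≤ ∫ u in Metric.ball x0 r, |F u| ^ s :=
      integral_nonneg fun u => by positivity
    have h1s : 0 < 1 / s := by rw [hs]; positivity
    have hs0 : 0 < s := by
      by_contra h
      push_neg at h
      have : 1 / s ≤ 0 := div_nonpos_of_nonneg_of_nonpos zero_le_one h
      linarith
    rw [Real.mul_rpow (Real.rpow_nonneg hr.le _) hI0, ← Real.rpow_mul hr.le]
    calc r ^ (-(d : ℝ) * (1 / s)) * (∫ u in Metric.ball x0 r, |F u| ^ s) ^ (1 / s)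
        ≤ r ^ (-(d : ℝ) * (1 / s)) * (C * r ^ E1) :=
          mul_le_mul_of_nonneg_left (main r hr hrr0) (Real.rpow_nonneg hr.le _)
      _ = C * r ^ (γ * α + (1 - γ) * β) := by
          have hexp : -(d : ℝ) * (1 / s) + E1 = γ * α + (1 - γ) * β := by
            rw [hE1, hs]
            field_simp
            ring
          rw [mul_left_comm, ← Real.rpow_add hr, hexp]
end

section
/- Let γ > 1, α ∈ ℝ and p ≥ 1 with γ + αp > 0, and let F_{α,γ} be the lacunary comb. Then there exist constants 0 < c ≤ C such that, for every integer J ≥ 1 and every a with 2^{-J} + 2^{-γJ} ≤ a ≤ 2^{-J+1}, one has c·2^{-J(γ + αp - 1)} ≤ (1/a) ∫_{-a}^{a} |F_{α,γ}(x)|^p dx ≤ C·2^{-J(γ + αp - 1)}. -/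
open MeasureTheory ENNReal NNReal

/-- The lacunary comb `F_{α,γ}`. -/
noncomputable def comb (α γ : ℝ) (x : ℝ) : ℝ :=
  ∑' j : ℕ,
    if 1 ≤ j ∧ (2 : ℝ) ^ (-(j : ℝ)) ≤ x ∧ x ≤ (2 : ℝ) ^ (-(j : ℝ)) + (2 : ℝ) ^ (-γ * (j : ℝ))
    then (2 : ℝ) ^ (-α * (j : ℝ)) else 0

namespace Stmt8Aux

/-- The condition that `x` lies in the `j`-th tooth. -/
def P (γ : ℝ) (j : ℕ) (x : ℝ) : Prop :=
  1 ≤ j ∧ (2 : ℝ) ^ (-(j : ℝ)) ≤ x ∧ x ≤ (2 : ℝ) ^ (-(j : ℝ)) + (2 : ℝ) ^ (-γ * (j : ℝ))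

lemma two_rpow_pos (x : ℝ) : 0 < (2:ℝ)^x := Real.rpow_pos_of_pos two_pos x

lemma right_lt {γ : ℝ} (hγ : 1 < γ) {k : ℕ} (hk : 1 ≤ k) :
    (2:ℝ)^(-(k:ℝ)) + (2:ℝ)^(-γ*(k:ℝ)) < (2:ℝ)^(-(k:ℝ)+1) := by
  have hk1 : (1:ℝ) ≤ (k:ℝ) := by exact_mod_cast hk
  have h1 : (2:ℝ)^(-γ*(k:ℝ)) < (2:ℝ)^(-(k:ℝ)) := by
    exact (Real.rpow_lt_rpow_left_iff one_lt_two).mpr (by nlinarith)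
  have h2 : (2:ℝ)^(-(k:ℝ)+1) = (2:ℝ)^(-(k:ℝ)) + (2:ℝ)^(-(k:ℝ)) := by
    rw [Real.rpow_add (by norm_num), Real.rpow_one]; ring
  linarith

lemma uniq {γ : ℝ} (hγ : 1 < γ) {j k : ℕ} {x : ℝ} (hj : P γ j x) (hk : P γ k x) : j = k := by
  by_contra hne
  wlog hlt : j < k generalizing j k
  · exact this hk hj (Ne.symm hne) (by omega)
  have h1 : x < (2:ℝ)^(-(k:ℝ)+1) := lt_of_le_of_lt hk.2.2 (right_lt hγ hk.1)
  have h2 : (2:ℝ)^(-(k:ℝ)+1) ≤ (2:ℝ)^(-(j:ℝ)) := by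
    have hjk : (j:ℝ)+1 ≤ (k:ℝ) := by exact_mod_cast hlt
    exact (Real.rpow_le_rpow_left_iff one_lt_two).mpr (by linarith)
  have := hj.2.1
  linarith

lemma comb_eq {α γ : ℝ} (hγ : 1 < γ) {j : ℕ} {x : ℝ} (hj : P γ j x) :
    comb α γ x = (2:ℝ)^(-α*(j:ℝ)) := by
  rw [comb]
  refine (tsum_eq_single j ?_).trans (if_pos hj)
  intro k hk
  exact if_neg fun hPk => hk (uniq hγ hPk hj)

lemma comb_zero {α γ : ℝ} {x : ℝ} (hx : ∀ j, ¬ P γ j x) : comb α γ x = 0 := by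
  rw [comb]
  convert tsum_zero with j
  exact if_neg (hx j)

/-- The `j`-th tooth as a set. -/
def T (γ : ℝ) (j : ℕ) : Set ℝ :=
  if 1 ≤ j then Set.Icc ((2:ℝ)^(-(j:ℝ))) ((2:ℝ)^(-(j:ℝ)) + (2:ℝ)^(-γ*(j:ℝ))) else ∅

lemma mem_T {γ : ℝ} {j : ℕ} {x : ℝ} : x ∈ T γ j ↔ P γ j x := by
  unfold T P
  split <;> simp_all

lemma measurableSet_T (γ : ℝ) (j : ℕ) : MeasurableSet (T γ j) := by
  unfold T; split
  · exact measurableSet_Icc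
  · exact MeasurableSet.empty

lemma abs_comb_rpow {α γ p : ℝ} (hγ : 1 < γ) (hp : 1 ≤ p) (x : ℝ) :
    |comb α γ x| ^ p
      = ∑' j : ℕ, (T γ j).indicator (fun _ => (2:ℝ)^(-(α*p)*(j:ℝ))) x := by
  by_cases hx : ∃ j, P γ j x
  · obtain ⟨j, hj⟩ := hx
    rw [tsum_eq_single j, Set.indicator_of_mem (mem_T.mpr hj), comb_eq hγ hj,
      abs_of_pos (two_rpow_pos _), ← Real.rpow_mul (by norm_num)]
    · congr 1; ring
    · intro k hk
      exact Set.indicator_of_notMem (fun hm => hk (uniq hγ (mem_T.mp hm) hj)) _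
  · push_neg at hx
    rw [comb_zero hx, abs_zero, Real.zero_rpow (by linarith)]
    symm
    convert tsum_zero with j
    exact Set.indicator_of_notMem (fun hm => hx j (mem_T.mp hm)) _

end Stmt8Aux

open Stmt8Aux in
/-- two-sided power-law estimate for the local `L^p` averages of the
lacunary comb: for `2^{-J} + 2^{-γJ} ≤ a ≤ 2^{-J+1}`,
`(1/a) ∫_{-a}^a |F_{α,γ}|^p ≍ 2^{-J(γ + αp - 1)}`. -/
theorem stmt8 (α γ p : ℝ) (hγ : 1 < γ) (hp : 1 ≤ p) (h : 0 < γ + α * p) :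
    ∃ c C : ℝ, 0 < c ∧ c ≤ C ∧ ∀ J : ℕ, 1 ≤ J → ∀ a : ℝ,
      (2 : ℝ) ^ (-(J : ℝ)) + (2 : ℝ) ^ (-γ * (J : ℝ)) ≤ a →
      a ≤ (2 : ℝ) ^ (-(J : ℝ) + 1) →
      c * (2 : ℝ) ^ (-(J : ℝ) * (γ + α * p - 1))
          ≤ (1 / a) * ∫ x in (-a)..a, |comb α γ x| ^ p ∧
        (1 / a) * ∫ x in (-a)..a, |comb α γ x| ^ p
          ≤ C * (2 : ℝ) ^ (-(J : ℝ) * (γ + α * p - 1)) := by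
  set s : ℝ := (2:ℝ)^(-(γ+α*p)) with hs_def
  have hs0 : 0 < s := two_rpow_pos _
  have hs1 : s < 1 := Real.rpow_lt_one_of_one_lt_of_neg one_lt_two (by linarith)
  have hspow : ∀ m : ℕ, (2:ℝ)^(-(γ+α*p)*(m:ℝ)) = s^m := by
    intro m
    rw [hs_def, ← Real.rpow_natCast ((2:ℝ)^(-(γ+α*p))) m, ← Real.rpow_mul (by norm_num)]
  have hCge : (1:ℝ) ≤ (1-s)⁻¹ := by
    rw [le_inv_comm₀ one_pos (by linarith)]
    linarith
  refine ⟨1/2, (1-s)⁻¹, by norm_num, by linarith, ?_⟩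
  intro J hJ a ha1 ha2
  set A : ℝ := (2:ℝ)^(-(J:ℝ)) with hA_def
  have hA0 : 0 < A := two_rpow_pos _
  have hg0 : 0 < (2:ℝ)^(-γ*(J:ℝ)) := two_rpow_pos _
  have haA : A ≤ a := by
    have := hg0; rw [hA_def]; linarith
  have ha0 : 0 < a := lt_of_lt_of_le hA0 haA
  have haU : a ≤ 2 * A := by
    have : (2:ℝ)^(-(J:ℝ)+1) = 2 * A := by
      rw [hA_def, Real.rpow_add (by norm_num), Real.rpow_one]; ring
    linarith
  -- compute the integral
  set w : ℕ → ℝ := fun j => if J ≤ j then (2:ℝ)^(-(γ+α*p)*(j:ℝ)) else 0 with hw_def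
  have hvol : ∀ j : ℕ, volume (T γ j ∩ Set.Ioc (-a) a)
      = if J ≤ j then ENNReal.ofReal ((2:ℝ)^(-γ*(j:ℝ))) else 0 := by
    intro j
    by_cases hjJ : J ≤ j
    · rw [if_pos hjJ]
      have hjJ' : (J:ℝ) ≤ (j:ℝ) := by exact_mod_cast hjJ
      have h1j : 1 ≤ j := le_trans hJ hjJ
      have hsubset : T γ j ⊆ Set.Ioc (-a) a := by
        rw [Stmt8Aux.T, if_pos h1j]
        intro x hx
        obtain ⟨hx1, hx2⟩ := hx
        constructor
        · have := two_rpow_pos (-(j:ℝ)); linarith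
        · have e1 : (2:ℝ)^(-(j:ℝ)) ≤ (2:ℝ)^(-(J:ℝ)) :=
            Real.rpow_le_rpow_left_iff one_lt_two |>.mpr (by linarith)
          have e2 : (2:ℝ)^(-γ*(j:ℝ)) ≤ (2:ℝ)^(-γ*(J:ℝ)) :=
            Real.rpow_le_rpow_left_iff one_lt_two |>.mpr (by nlinarith)
          linarith
      rw [Set.inter_eq_left.mpr hsubset, Stmt8Aux.T, if_pos h1j, Real.volume_Icc]
      congr 1; ring
    · rw [if_neg hjJ]
      apply measure_mono_null (fun x hx => ?_) (measure_singleton a)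
      obtain ⟨hxT, hxI⟩ := hx
      have hP := mem_T.mp hxT
      have hj1 : (j:ℝ) + 1 ≤ (J:ℝ) := by
        have : j + 1 ≤ J := by omega
        exact_mod_cast this
      have e1 : (2:ℝ)^(-(J:ℝ)+1) ≤ (2:ℝ)^(-(j:ℝ)) :=
        Real.rpow_le_rpow_left_iff one_lt_two |>.mpr (by linarith)
      have : a ≤ x := le_trans (le_trans ha2 e1) hP.2.1
      have : x = a := le_antisymm hxI.2 this
      simp [this]
  have hint : (∫ x in (-a)..a, |comb α γ x| ^ p) = ∑' j, w j := by
    rw [intervalIntegral.integral_of_le (by linarith)]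
    have hpt : (fun x => |comb α γ x| ^ p)
        = fun x => ∑' j : ℕ, (T γ j).indicator (fun _ => (2:ℝ)^(-(α*p)*(j:ℝ))) x := by
      funext x; exact abs_comb_rpow hγ hp x
    rw [hpt]
    rw [MeasureTheory.integral_tsum]
    · apply tsum_congr
      intro j
      rw [MeasureTheory.integral_indicator (measurableSet_T γ j),
        MeasureTheory.Measure.restrict_restrict (measurableSet_T γ j),
        MeasureTheory.setIntegral_const, MeasureTheory.measureReal_def, hvol j]
      simp only [hw_def]
      by_cases hjJ : J ≤ j
      · rw [if_pos hjJ, if_pos hjJ, smul_eq_mul,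
          ENNReal.toReal_ofReal (le_of_lt (two_rpow_pos _)),
          ← Real.rpow_add (by norm_num)]
        congr 1; ring
      · rw [if_neg hjJ, if_neg hjJ]; simp
    · intro i
      exact ((measurable_const.indicator (measurableSet_T γ i)).aestronglyMeasurable)
    · have hbound : ∀ i : ℕ, (∫⁻ x in Set.Ioc (-a) a,
          ‖(T γ i).indicator (fun _ => (2:ℝ)^(-(α*p)*(i:ℝ))) x‖₊ ∂volume)
          ≤ ENNReal.ofReal (s^i) := by
        intro i
        have heq : (fun x => (‖(T γ i).indicator (fun _ => (2:ℝ)^(-(α*p)*(i:ℝ))) x‖₊ : ℝ≥0∞))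
            = fun x => (T γ i).indicator
                (fun _ => ENNReal.ofReal ((2:ℝ)^(-(α*p)*(i:ℝ)))) x := by
          funext x
          by_cases hx : x ∈ T γ i
          · simp only [Set.indicator_of_mem hx]
            exact Real.enorm_eq_ofReal (le_of_lt (two_rpow_pos _))
          · simp [Set.indicator_of_notMem hx]
        rw [heq, MeasureTheory.lintegral_indicator (measurableSet_T γ i),
          MeasureTheory.Measure.restrict_restrict (measurableSet_T γ i),
          MeasureTheory.setLIntegral_const, hvol i]
        by_cases hiJ : J ≤ i
        · rw [if_pos hiJ, ← ENNReal.ofReal_mul (le_of_lt (two_rpow_pos _)),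
            ← Real.rpow_add (by norm_num), ← hspow i]
          apply le_of_eq
          congr 1
          ring
        · simp [if_neg hiJ]
      have hle : ∑' i : ℕ, (∫⁻ x in Set.Ioc (-a) a,
              ‖(T γ i).indicator (fun _ => (2:ℝ)^(-(α*p)*(i:ℝ))) x‖₊ ∂volume)
          ≤ ENNReal.ofReal (∑' i : ℕ, s^i) := by
        rw [ENNReal.ofReal_tsum_of_nonneg (fun i => pow_nonneg hs0.le i)
              (summable_geometric_of_lt_one hs0.le hs1)]
        exact ENNReal.tsum_le_tsum hbound
      exact ne_top_of_le_ne_top ENNReal.ofReal_ne_top hle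
  -- sum of w
  have hsum : ∑' j, w j = s^J * (1-s)⁻¹ := by
    have hinj : Function.Injective (fun n : ℕ => J + n) := fun a b hab => by simpa using hab
    have hsupp : Function.support w ⊆ Set.range (fun n : ℕ => J + n) := by
      intro j hj
      rw [Function.mem_support] at hj
      by_cases hjJ : J ≤ j
      · exact ⟨j - J, by show J + (j - J) = j; omega⟩
      · exact absurd (by simp only [hw_def]; rw [if_neg hjJ]) hj
    rw [← hinj.tsum_eq hsupp]
    have hterm : ∀ n : ℕ, w (J + n) = s^J * s^n := by
      intro n
      simp only [hw_def]
      rw [if_pos (Nat.le_add_right J n), Nat.cast_add,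
        show -(γ+α*p)*((J:ℝ)+(n:ℝ)) = (-(γ+α*p)*(J:ℝ)) + (-(γ+α*p)*(n:ℝ)) by ring,
        Real.rpow_add (by norm_num), hspow J, hspow n]
    simp only [hterm]
    rw [_root_.tsum_mul_left, tsum_geometric_of_lt_one hs0.le hs1]
  -- final arithmetic
  have hAinv : A⁻¹ = (2:ℝ)^(J:ℝ) := by
    rw [hA_def, Real.rpow_neg (by norm_num), inv_inv]
  have hkey : (2:ℝ)^(-(J:ℝ)*(γ+α*p-1)) = s^J * A⁻¹ := by
    rw [show (-(J:ℝ))*(γ+α*p-1) = (-(γ+α*p)*(J:ℝ)) + (J:ℝ) by ring,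
      Real.rpow_add (by norm_num), hspow J, hAinv]
  rw [hint, hsum, hkey]
  have hsJ : (0:ℝ) < s^J := pow_pos hs0 J
  constructor
  · have h1 : 1/2 * (s^J * A⁻¹) = 1/(2*A) * (s^J * 1) := by
      field_simp
    rw [h1]
    have hd1 : 1/(2*A) ≤ 1/a := one_div_le_one_div_of_le ha0 haU
    gcongr
  · have h2 : (1-s)⁻¹ * (s^J * A⁻¹) = 1/A * (s^J * (1-s)⁻¹) := by
      field_simp
    rw [h2]
    have hd2 : 1/a ≤ 1/A := one_div_le_one_div_of_le hA0 haA
    gcongr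
end

section
/- Let p ≥ 1, a > 1, α ∈ ℝ, and let X : ℝ → ℝ be a function, locally in L^p(ℝ), that is self-similar at 0 with scaling ratio a and exponent α, i.e., a^α X(x) = X(ax) for almost every x. Then there exist functions ω₊, ω₋ : ℝ → ℝ, each periodic of period log a and with |ω₊|^p, |ω₋|^p integrable on [0, log a], such that X(x) = |x|^α ω₊(log x) for almost every x > 0 and X(x) = |x|^α ω₋(log(-x)) for almost every x < 0. -/
open MeasureTheory

lemma aux_cov (p L α c : ℝ) (hL : 0 < L) (hc : |c| = 1) (Y : ℝ → ℝ) (hY : Measurable Y)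
    (hInt : IntegrableOn (fun t => |Y t| ^ p) (Set.Ioo (-(Real.exp L + 1)) (Real.exp L + 1))) :
    IntegrableOn (fun u => |Real.exp (-(α * u)) * Y (c * Real.exp u)| ^ p) (Set.Ico 0 L) := by
  have hc0 : c ≠ 0 := by intro h; simp [h] at hc
  have himg : (fun u => c * Real.exp u) '' Set.Ico 0 L ⊆
      Set.Ioo (-(Real.exp L + 1)) (Real.exp L + 1) := by
    rintro _ ⟨u, hu, rfl⟩
    have h1 : |c * Real.exp u| = Real.exp u := by rw [abs_mul, hc, one_mul, abs_of_pos (Real.exp_pos u)]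
    have h2 : Real.exp u ≤ Real.exp L := Real.exp_le_exp.2 hu.2.le
    refine ⟨?_, ?_⟩ <;> simp only []
    · nlinarith [abs_nonneg (c * Real.exp u), neg_abs_le (c * Real.exp u)]
    · nlinarith [le_abs_self (c * Real.exp u)]
  have h1 : IntegrableOn (fun t => |Y t| ^ p) ((fun u => c * Real.exp u) '' Set.Ico 0 L) :=
    hInt.mono_set himg
  have hderiv : ∀ x ∈ Set.Ico 0 L, HasDerivWithinAt (fun u => c * Real.exp u) (c * Real.exp x)
      (Set.Ico 0 L) x := fun x _ => ((Real.hasDerivAt_exp x).const_mul c).hasDerivWithinAt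
  have hinj : Set.InjOn (fun u => c * Real.exp u) (Set.Ico 0 L) := by
    intro x _ y _ h
    exact Real.exp_injective (mul_left_cancel₀ hc0 h)
  rw [integrableOn_image_iff_integrableOn_abs_deriv_smul measurableSet_Ico hderiv hinj] at h1
  have h2 := h1.const_mul (Real.exp ((|α * p| + 1) * L))
  apply Integrable.mono' h2
  · apply Measurable.aestronglyMeasurable
    fun_prop
  · rw [ae_restrict_iff' measurableSet_Ico]
    filter_upwards with u hu
    have habs : |c * Real.exp u| = Real.exp u := by
      rw [abs_mul, hc, one_mul, abs_of_pos (Real.exp_pos u)]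
    rw [Real.norm_eq_abs, abs_of_nonneg (Real.rpow_nonneg (abs_nonneg _) p), habs, smul_eq_mul]
    rw [abs_mul, abs_of_pos (Real.exp_pos _),
      Real.mul_rpow (Real.exp_nonneg _) (abs_nonneg _), ← Real.exp_mul]
    have key : Real.exp (-(α * u) * p) ≤ Real.exp ((|α * p| + 1) * L) * Real.exp u := by
      rw [← Real.exp_add]
      apply Real.exp_le_exp.2
      have h3 : -(α * u) * p ≤ |α * p| * u := by
        have := neg_abs_le (α * p)
        nlinarith [hu.1, abs_nonneg (α * p)]
      nlinarith [hu.1, hu.2.le, abs_nonneg (α * p)]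
    nlinarith [Real.rpow_nonneg (abs_nonneg (Y (c * Real.exp u))) p, Real.exp_pos u,
      Real.exp_pos ((|α * p| + 1) * L)]

/-- a function that is locally in `L^p` and self-similar at `0` of scaling
ratio `a > 1` and exponent `α` (`a^α X(x) = X(ax)` a.e.) can be written as
`X(x) = |x|^α ω₊(log x)` for a.e. `x > 0` and `X(x) = |x|^α ω₋(log(-x))` for a.e.
`x < 0`, with `ω₊, ω₋` periodic of period `log a` and `|ω₊|^p, |ω₋|^p` integrable on a
period. -/
theorem stmt12 (p a α : ℝ) (hp : 1 ≤ p) (ha : 1 < a) (X : ℝ → ℝ)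
    (hloc : ∀ R : ℝ, 0 < R →
      MemLp X (ENNReal.ofReal p) (volume.restrict (Set.Ioo (-R) R)))
    (hss : ∀ᵐ x : ℝ, a ^ α * X x = X (a * x)) :
    ∃ ωp ωm : ℝ → ℝ,
      (∀ u : ℝ, ωp (u + Real.log a) = ωp u) ∧
      (∀ u : ℝ, ωm (u + Real.log a) = ωm u) ∧
      IntegrableOn (fun u => |ωp u| ^ p) (Set.Icc 0 (Real.log a)) ∧
      IntegrableOn (fun u => |ωm u| ^ p) (Set.Icc 0 (Real.log a)) ∧
      (∀ᵐ x : ℝ, 0 < x → X x = |x| ^ α * ωp (Real.log x)) ∧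
      (∀ᵐ x : ℝ, x < 0 → X x = |x| ^ α * ωm (Real.log (-x))) := by
  have ha0 : (0:ℝ) < a := lt_trans one_pos ha
  set L := Real.log a with hLdef
  have hL : 0 < L := Real.log_pos ha
  -- a measurable representative
  have hXae : AEStronglyMeasurable X volume := by
    have hcov : (Set.univ : Set ℝ) = ⋃ n : ℕ, Set.Ioo (-(n+1) : ℝ) (n+1) := by
      ext x
      simp only [Set.mem_univ, Set.mem_iUnion, Set.mem_Ioo, true_iff]
      obtain ⟨n, hn⟩ := exists_nat_gt |x|
      exact ⟨n, by cases abs_lt.1 hn with | intro h1 h2 => constructor <;> linarith⟩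
    have : AEStronglyMeasurable X (volume.restrict (Set.univ : Set ℝ)) := by
      rw [hcov, aestronglyMeasurable_iUnion_iff]
      intro n
      exact (hloc (n+1) (by positivity)).aestronglyMeasurable
    simpa using this
  set Y := hXae.mk X with hYdef
  have hYm : Measurable Y := hXae.stronglyMeasurable_mk.measurable
  have hXY : X =ᵐ[volume] Y := hXae.ae_eq_mk
  have hqmp : ∀ c : ℝ, c ≠ 0 →
      Measure.QuasiMeasurePreserving (fun x : ℝ => c * x) volume volume := by
    intro c hc
    refine ⟨measurable_const_mul c, ?_⟩
    rw [Real.map_volume_mul_left hc]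
    exact Measure.AbsolutelyContinuous.mk fun s _ h0 => by simp [Measure.smul_apply, h0]
  have hssY : ∀ᵐ x : ℝ, a ^ α * Y x = Y (a * x) := by
    have h3 : (fun x => X (a * x)) =ᵐ[volume] fun x => Y (a * x) :=
      (hqmp a ha0.ne').ae_eq hXY
    filter_upwards [hss, hXY, h3] with x h1 h2 h3
    rw [← h2, h1]; exact h3
  have hU : ∀ᵐ x : ℝ, ∀ n : ℤ, a ^ α * Y (a ^ n * x) = Y (a * (a ^ n * x)) := by
    rw [ae_all_iff]
    intro n
    exact (hqmp (a ^ n) (zpow_ne_zero n ha0.ne')).ae hssY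
  have hzpow : ∀ n : ℤ, (a:ℝ) ^ n = Real.exp ((n:ℝ) * L) := fun n => by
    rw [← Real.rpow_intCast, Real.rpow_def_of_pos ha0, mul_comm]
  have hane : (a:ℝ) ^ α ≠ 0 := (Real.rpow_pos_of_pos ha0 α).ne'
  have hUY : ∀ᵐ x : ℝ, ∀ n : ℤ, Y (a ^ n * x) = a ^ ((n:ℝ) * α) * Y x := by
    filter_upwards [hU] with x hx
    intro n
    induction n using Int.induction_on with
    | zero => simp
    | succ k ih =>
      have e : (a:ℝ) ^ ((k:ℤ) + 1) * x = a * ((a:ℝ) ^ (k:ℤ) * x) := by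
        rw [zpow_add_one₀ ha0.ne']; ring
      rw [e, ← hx k, ih, ← mul_assoc, ← Real.rpow_add ha0]
      push_cast
      ring_nf
    | pred k ih =>
      have e2 : a * ((a:ℝ) ^ (-(k:ℤ) - 1) * x) = (a:ℝ) ^ (-(k:ℤ)) * x := by
        rw [show (-(k:ℤ)) = (-(k:ℤ) - 1) + 1 by ring, zpow_add_one₀ ha0.ne']; ring
      have h5 := hx (-(k:ℤ) - 1)
      rw [e2, ih] at h5
      apply mul_left_cancel₀ hane
      rw [h5, ← mul_assoc, ← Real.rpow_add ha0]
      push_cast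
      ring_nf
  -- the periodic functions
  set r : ℝ → ℝ := fun u => u - L * ⌊u / L⌋ with hrdef
  set ωp : ℝ → ℝ := fun u => Real.exp (-(α * r u)) * Y (Real.exp (r u)) with hωpdef
  set ωm : ℝ → ℝ := fun u => Real.exp (-(α * r u)) * Y (-Real.exp (r u)) with hωmdef
  have hr : ∀ u, r (u + L) = r u := by
    intro u
    simp only [hrdef]
    rw [add_div, div_self hL.ne', Int.floor_add_one]
    push_cast
    ring
  have hreq : ∀ u ∈ Set.Ico 0 L, r u = u := by
    intro u hu
    simp only [hrdef]
    rw [Int.floor_eq_zero_iff.2 ⟨div_nonneg hu.1 hL.le, (div_lt_one hL).2 hu.2⟩]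
    simp
  -- integrability
  have heL : Real.exp L = a := Real.exp_log ha0
  have hbig : IntegrableOn (fun t => |Y t| ^ p) (Set.Ioo (-(Real.exp L + 1)) (Real.exp L + 1)) := by
    rw [heL]
    have hm := hloc (a + 1) (by linarith)
    have hmY : MemLp Y (ENNReal.ofReal p) (volume.restrict (Set.Ioo (-(a+1)) (a+1))) :=
      hm.ae_eq (ae_restrict_of_ae hXY)
    have hi := hmY.integrable_norm_rpow (by simp; linarith) ENNReal.ofReal_ne_top
    simpa [ENNReal.toReal_ofReal (by linarith : (0:ℝ) ≤ p), Real.norm_eq_abs, IntegrableOn] using hi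
  have hIcc : ∀ f : ℝ → ℝ, IntegrableOn f (Set.Ico 0 L) → IntegrableOn f (Set.Icc 0 L) :=
    fun f h => h.congr_set_ae (Ico_ae_eq_Icc).symm
  have hIp : IntegrableOn (fun u => |ωp u| ^ p) (Set.Icc 0 L) := by
    apply hIcc
    have h1 := aux_cov p L α 1 hL (by norm_num) Y hYm hbig
    simp only [one_mul] at h1
    refine h1.congr_fun ?_ measurableSet_Ico
    intro u hu
    simp only [hωpdef, hreq u hu]
  have hIm : IntegrableOn (fun u => |ωm u| ^ p) (Set.Icc 0 L) := by
    apply hIcc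
    have h1 := aux_cov p L α (-1) hL (by norm_num) Y hYm hbig
    simp only [neg_one_mul] at h1
    refine h1.congr_fun ?_ measurableSet_Ico
    intro u hu
    simp only [hωmdef, hreq u hu]
  refine ⟨ωp, ωm, fun u => by simp only [hωpdef, hr], fun u => by simp only [hωmdef, hr],
    hIp, hIm, ?_, ?_⟩
  · -- positive side
    filter_upwards [hXY, hUY] with x h2 hx hxpos
    set n := ⌊Real.log x / L⌋ with hn
    have hru : r (Real.log x) = Real.log x - L * n := rfl
    have hexp : Real.exp (r (Real.log x)) = a ^ (-n : ℤ) * x := by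
      rw [hru, Real.exp_sub, Real.exp_log hxpos, hzpow (-n), Int.cast_neg, neg_mul,
        Real.exp_neg, mul_comm L (n:ℝ), div_eq_inv_mul]
    rw [abs_of_pos hxpos, h2]
    simp only [hωpdef]
    rw [hexp, hx (-n), Real.rpow_def_of_pos hxpos, hru]
    have hra : (a:ℝ) ^ (((-n:ℤ):ℝ) * α) = Real.exp ((((-n:ℤ):ℝ) * α) * L) := by
      rw [Real.rpow_def_of_pos ha0, mul_comm]
    rw [hra]
    have hone : Real.exp (Real.log x * α) * (Real.exp (-(α * (Real.log x - L * n))) *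
        Real.exp ((((-n:ℤ):ℝ) * α) * L)) = 1 := by
      rw [← Real.exp_add, ← Real.exp_add, show Real.log x * α + (-(α * (Real.log x - L * n)) +
        ((-n:ℤ):ℝ) * α * L) = 0 by push_cast; ring, Real.exp_zero]
    linear_combination (-(Y x)) * hone
  · -- negative side
    filter_upwards [hXY, hUY] with x h2 hx hxneg
    have hmx : (0:ℝ) < -x := by linarith
    set n := ⌊Real.log (-x) / L⌋ with hn
    have hru : r (Real.log (-x)) = Real.log (-x) - L * n := rfl
    have hexp : -Real.exp (r (Real.log (-x))) = a ^ (-n : ℤ) * x := by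
      rw [hru, Real.exp_sub, Real.exp_log hmx, hzpow (-n), Int.cast_neg, neg_mul,
        Real.exp_neg, mul_comm L (n:ℝ)]
      ring
    rw [abs_of_neg hxneg, h2]
    simp only [hωmdef]
    rw [show Y (-Real.exp (r (Real.log (-x)))) = Y (a ^ (-n:ℤ) * x) from congrArg Y hexp,
      hx (-n), Real.rpow_def_of_pos hmx, hru]
    have hra : (a:ℝ) ^ (((-n:ℤ):ℝ) * α) = Real.exp ((((-n:ℤ):ℝ) * α) * L) := by
      rw [Real.rpow_def_of_pos ha0, mul_comm]
    rw [hra]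
    have hone : Real.exp (Real.log (-x) * α) * (Real.exp (-(α * (Real.log (-x) - L * n))) *
        Real.exp ((((-n:ℤ):ℝ) * α) * L)) = 1 := by
      rw [← Real.exp_add, ← Real.exp_add, show Real.log (-x) * α + (-(α * (Real.log (-x) - L * n)) +
        ((-n:ℤ):ℝ) * α * L) = 0 by push_cast; ring, Real.exp_zero]
    linear_combination (-(Y x)) * hone
end

section
/- Let p ≥ 1, T > 0, let ω : ℝ → ℝ be a measurable T-periodic function with ∫_0^T |ω(u)|^p du < ∞ and ω not almost everywhere zero, and let α ∈ ℝ with αp > -1. Then there exist constants 0 < c ≤ C such that, for all r ∈ (0,1], c·r^{αp} ≤ (1/r) ∫_0^r x^{αp} |ω(log x)|^p dx ≤ C·r^{αp}. -/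
open MeasureTheory Set
open scoped ENNReal

private lemma stmt14_shiftL (f : ℝ → ℝ≥0∞) (c : ℝ) (s : Set ℝ) :
    ∫⁻ x in (fun x => x + c) ⁻¹' s, f (x + c) = ∫⁻ x in s, f x :=
  (measurePreserving_add_right volume c).setLIntegral_comp_preimage_emb
    (measurableEmbedding_addRight c) f s

private lemma stmt14_expIic (L : ℝ) : Real.exp '' Iic L = Ioc 0 (Real.exp L) := by
  ext x
  constructor
  · rintro ⟨u, hu, rfl⟩
    exact ⟨Real.exp_pos u, Real.exp_le_exp.2 hu⟩
  · rintro ⟨hx0, hxL⟩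
    exact ⟨Real.log x, (Real.log_le_iff_le_exp hx0).2 hxL, Real.exp_log hx0⟩

private lemma stmt14_floorpick (T y : ℝ) (hT : 0 < T) (hy : y ≤ 0) :
    ∃ n : ℕ, -((n:ℝ)+1)*T < y ∧ y ≤ -(n:ℝ)*T := by
  refine ⟨⌊-y/T⌋₊, ?_, ?_⟩
  · have h := Nat.lt_floor_add_one (-y/T)
    rw [div_lt_iff₀ hT] at h
    linarith
  · have h := Nat.floor_le (div_nonneg (neg_nonneg.2 hy) hT.le)
    rw [le_div_iff₀ hT] at h
    linarith

/-- if `ω` is measurable, `T`-periodic, with `|ω|^p` integrable on a period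
and `ω` not a.e. zero, and `αp > -1`, then
`(1/r) ∫_0^r x^{αp} |ω(log x)|^p dx ≍ r^{αp}` for `r ∈ (0,1]`. -/
theorem stmt14 (p T α : ℝ) (hp : 1 ≤ p) (hT : 0 < T)
    (ω : ℝ → ℝ) (hmeas : Measurable ω) (hper : ∀ u : ℝ, ω (u + T) = ω u)
    (hint : IntegrableOn (fun u => |ω u| ^ p) (Set.Icc 0 T))
    (hnz : ¬ (∀ᵐ u ∂(volume.restrict (Set.Icc 0 T)), ω u = 0))
    (hα : -1 < α * p) :
    ∃ c C : ℝ, 0 < c ∧ c ≤ C ∧ ∀ r ∈ Set.Ioc (0 : ℝ) 1,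
      c * r ^ (α * p)
          ≤ (1 / r) * ∫ x in Set.Ioc (0 : ℝ) r, x ^ (α * p) * |ω (Real.log x)| ^ p ∧
        (1 / r) * ∫ x in Set.Ioc (0 : ℝ) r, x ^ (α * p) * |ω (Real.log x)| ^ p
          ≤ C * r ^ (α * p) := by
  set β := α * p with hβ
  set γ := β + 1 with hγdef
  have hγ : 0 < γ := by rw [hγdef]; linarith
  set F : ℝ → ℝ≥0∞ := fun u => ENNReal.ofReal (Real.exp (γ*u) * |ω u| ^ p) with hF
  set W : ℝ → ℝ≥0∞ := fun u => ENNReal.ofReal (|ω u| ^ p) with hW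
  have hWmeas : Measurable W := by rw [hW]; fun_prop
  have hFmeas : Measurable F := by rw [hF]; fun_prop
  set Λ : ℝ → ℝ≥0∞ := fun L => ∫⁻ u in Iic L, F u with hΛ
  set q : ℝ≥0∞ := ENNReal.ofReal (Real.exp (-(γ*T))) with hqdef
  have hq1 : q < 1 := by
    rw [hqdef]
    exact ENNReal.ofReal_lt_one.2 (Real.exp_lt_one_iff.2 (by nlinarith))
  have hqt : q ≠ ⊤ := ENNReal.ofReal_ne_top
  have hq0 : q ≠ 0 := by
    rw [hqdef]
    simp [Real.exp_pos]
  have hqpow : ∀ k : ℕ, q ^ k = ENNReal.ofReal (Real.exp ((k:ℝ) * (-(γ*T)))) := by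
    intro k
    rw [hqdef, ← ENNReal.ofReal_pow (Real.exp_nonneg _), ← Real.exp_nat_mul]
  -- iterated periodicity
  have hωn : ∀ (n : ℕ) (u : ℝ), ω (u + (n:ℝ)*T) = ω u := by
    intro n
    induction n with
    | zero => simp
    | succ n ih =>
      intro u
      have h : u + ((n+1:ℕ):ℝ)*T = (u + (n:ℝ)*T) + T := by push_cast; ring
      rw [h, hper, ih]
  -- shifted integrals of W over period intervals
  have hWsh : ∀ n : ℕ, ∫⁻ u in Ioc (-((n:ℝ)+1)*T) (-(n:ℝ)*T), W u = ∫⁻ u in Ioc 0 T, W u := by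
    intro n
    have h1 : (fun x => x + ((n:ℝ)+1)*T) ⁻¹' Ioc 0 T = Ioc (-((n:ℝ)+1)*T) (-(n:ℝ)*T) := by
      ext x
      simp only [mem_preimage, mem_Ioc]
      constructor <;> intro h <;> constructor <;> nlinarith [h.1, h.2]
    have h2 := stmt14_shiftL W (((n:ℝ)+1)*T) (Ioc 0 T)
    rw [h1] at h2
    rw [← h2]
    refine lintegral_congr fun x => ?_
    rw [hW]
    simp only
    rw [show x + ((n:ℝ)+1)*T = x + ((n+1:ℕ):ℝ)*T by push_cast; ring, hωn (n+1)]
  set KIoc : ℝ≥0∞ := ∫⁻ u in Ioc 0 T, W u with hKdef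
  have hKfin : KIoc ≠ ⊤ := by
    have h1 : ∫⁻ u in Icc (0:ℝ) T, W u < ⊤ := by
      have h2 := hint.2
      rw [hasFiniteIntegral_iff_ofReal] at h2
      · exact h2
      · exact Filter.Eventually.of_forall fun x => by positivity
    exact ne_top_of_le_ne_top h1.ne (lintegral_mono_set Ioc_subset_Icc_self)
  have hKpos : KIoc ≠ 0 := by
    intro h0
    apply hnz
    rw [← restrict_Ioc_eq_restrict_Icc]
    have h1 := (lintegral_eq_zero_iff hWmeas).1 h0
    filter_upwards [h1] with u hu
    simp only [hW, Pi.zero_apply, ENNReal.ofReal_eq_zero] at hu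
    have h2 : |ω u| ^ p = 0 := le_antisymm hu (by positivity)
    have h3 := (Real.rpow_eq_zero_iff_of_nonneg (abs_nonneg _)).1 h2
    exact abs_eq_zero.1 h3.1
  -- shift identity for Λ
  have hΛsh : ∀ L : ℝ, Λ (L - T) = q * Λ L := by
    intro L
    have hpre : (fun x => x + T) ⁻¹' Iic L = Iic (L - T) := by
      ext x; simp [le_sub_iff_add_le]
    have h2 := stmt14_shiftL F T (Iic L)
    rw [hpre] at h2
    have h3 : ∀ x : ℝ, F (x + T) = ENNReal.ofReal (Real.exp (γ*T)) * F x := by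
      intro x
      rw [hF]
      simp only
      rw [hper, ← ENNReal.ofReal_mul (Real.exp_nonneg _),
        show γ*(x+T) = γ*T + γ*x by ring, Real.exp_add, mul_assoc]
    rw [lintegral_congr (fun x => h3 x),
      lintegral_const_mul' _ _ ENNReal.ofReal_ne_top] at h2
    calc Λ (L - T) = (q * ENNReal.ofReal (Real.exp (γ*T))) * Λ (L - T) := by
          rw [hqdef, ← ENNReal.ofReal_mul (Real.exp_nonneg _), ← Real.exp_add]
          norm_num
      _ = q * Λ L := by rw [mul_assoc, h2]
  have hΛn : ∀ n : ℕ, Λ (-(n:ℝ)*T) = q ^ n * Λ 0 := by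
    intro n
    induction n with
    | zero => simp
    | succ n ih =>
      have h1 : -((n+1:ℕ):ℝ)*T = -(n:ℝ)*T - T := by push_cast; ring
      rw [h1, hΛsh, ih, pow_succ]
      ring
  -- partition of Iic 0
  have hpartition : Iic (0:ℝ) = ⋃ n : ℕ, Ioc (-((n:ℝ)+1)*T) (-(n:ℝ)*T) := by
    ext y
    simp only [mem_Iic, mem_iUnion, mem_Ioc]
    constructor
    · intro hy
      obtain ⟨n, h1, h2⟩ := stmt14_floorpick T y hT hy
      exact ⟨n, h1, h2⟩
    · rintro ⟨n, _, h2⟩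
      have hn0 : (0:ℝ) ≤ (n:ℝ)*T := mul_nonneg (Nat.cast_nonneg n) hT.le
      linarith
  have hdisj : Pairwise (Function.onFun Disjoint fun n : ℕ => Ioc (-((n:ℝ)+1)*T) (-(n:ℝ)*T)) := by
    intro m n hmn
    rcases hmn.lt_or_gt with h | h
    · refine Set.Ioc_disjoint_Ioc.2 ?_
      have hc : -(n:ℝ)*T ≤ -((m:ℝ)+1)*T := by
        have : ((m:ℝ)+1) ≤ (n:ℝ) := by exact_mod_cast h
        nlinarith
      exact (min_le_right _ _).trans (hc.trans (le_max_left _ _))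
    · refine Set.Ioc_disjoint_Ioc.2 ?_
      have hc : -(m:ℝ)*T ≤ -((n:ℝ)+1)*T := by
        have : ((n:ℝ)+1) ≤ (m:ℝ) := by exact_mod_cast h
        nlinarith
      exact (min_le_left _ _).trans (hc.trans (le_max_right _ _))
  -- piece bounds
  have hpiece : ∀ n : ℕ, (∫⁻ u in Ioc (-((n:ℝ)+1)*T) (-(n:ℝ)*T), F u) ≤ q ^ n * KIoc := by
    intro n
    have h1 : ∀ u ∈ Ioc (-((n:ℝ)+1)*T) (-(n:ℝ)*T), F u ≤ q ^ n * W u := by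
      intro u hu
      rw [hF, hW, hqpow]
      simp only
      rw [← ENNReal.ofReal_mul (Real.exp_nonneg _)]
      apply ENNReal.ofReal_le_ofReal
      apply mul_le_mul_of_nonneg_right _ (by positivity)
      apply Real.exp_le_exp.2
      have h5 : γ*u ≤ γ * (-(n:ℝ)*T) := mul_le_mul_of_nonneg_left hu.2 hγ.le
      have h6 : γ * (-(n:ℝ)*T) = (n:ℝ)*(-(γ*T)) := by ring
      linarith
    calc (∫⁻ u in Ioc (-((n:ℝ)+1)*T) (-(n:ℝ)*T), F u)
        ≤ ∫⁻ u in Ioc (-((n:ℝ)+1)*T) (-(n:ℝ)*T), q ^ n * W u :=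
          setLIntegral_mono (hWmeas.const_mul _) h1
      _ = q ^ n * ∫⁻ u in Ioc (-((n:ℝ)+1)*T) (-(n:ℝ)*T), W u :=
          lintegral_const_mul' _ _ (ENNReal.pow_ne_top hqt)
      _ = q ^ n * KIoc := by rw [hWsh]
  have hΛ0fin : Λ 0 ≠ ⊤ := by
    have h1 : Λ 0 = ∑' n : ℕ, ∫⁻ u in Ioc (-((n:ℝ)+1)*T) (-(n:ℝ)*T), F u := by
      rw [hΛ]
      simp only
      rw [hpartition]
      exact lintegral_iUnion (fun n => measurableSet_Ioc) hdisj F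
    have h2 : Λ 0 ≤ (∑' n : ℕ, q ^ n) * KIoc := by
      rw [h1, ← ENNReal.tsum_mul_right]
      exact ENNReal.tsum_le_tsum hpiece
    rw [ENNReal.tsum_geometric] at h2
    exact ne_top_of_le_ne_top
      (ENNReal.mul_ne_top (ENNReal.inv_ne_top.2 (tsub_pos_of_lt hq1).ne') hKfin) h2
  have hΛ0pos : Λ 0 ≠ 0 := by
    have h1 : ∀ u ∈ Ioc (-T) (0:ℝ), q * W u ≤ F u := by
      intro u hu
      rw [hF, hW, hqdef]
      simp only
      rw [← ENNReal.ofReal_mul (Real.exp_nonneg _)]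
      apply ENNReal.ofReal_le_ofReal
      apply mul_le_mul_of_nonneg_right _ (by positivity)
      apply Real.exp_le_exp.2
      nlinarith [hu.1]
    have h5 := hWsh 0
    norm_num at h5
    have h2 : q * KIoc ≤ Λ 0 := by
      have h3 : (∫⁻ u in Ioc (-T) (0:ℝ), q * W u) ≤ ∫⁻ u in Ioc (-T) (0:ℝ), F u :=
        setLIntegral_mono hFmeas h1
      have h4 : ∫⁻ u in Ioc (-T) (0:ℝ), q * W u = q * KIoc := by
        rw [lintegral_const_mul' _ _ hqt, h5]
      calc q * KIoc = ∫⁻ u in Ioc (-T) (0:ℝ), q * W u := h4.symm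
        _ ≤ ∫⁻ u in Ioc (-T) (0:ℝ), F u := h3
        _ ≤ Λ 0 := lintegral_mono_set (fun x hx => hx.2)
    intro h0
    rw [h0] at h2
    rcases mul_eq_zero.1 (le_antisymm h2 zero_le) with h | h
    exacts [hq0 h, hKpos h]
  -- integral identification
  have hInt : ∀ r : ℝ, 0 < r →
      (∫ x in Ioc (0:ℝ) r, x ^ β * |ω (Real.log x)| ^ p) = (Λ (Real.log r)).toReal := by
    intro r hr
    have himg : Real.exp '' Iic (Real.log r) = Ioc 0 r := by
      rw [stmt14_expIic, Real.exp_log hr]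
    rw [← himg, integral_image_eq_integral_abs_deriv_smul measurableSet_Iic
      (fun x _ => (Real.hasDerivAt_exp x).hasDerivWithinAt) Real.exp_injective.injOn _]
    have heq : ∀ u : ℝ, |Real.exp u| • (Real.exp u ^ β * |ω (Real.log (Real.exp u))| ^ p)
        = Real.exp (γ*u) * |ω u| ^ p := by
      intro u
      rw [smul_eq_mul, abs_of_pos (Real.exp_pos u), Real.log_exp, ← Real.exp_mul,
        ← mul_assoc, ← Real.exp_add, show u + u*β = γ*u by rw [hγdef]; ring]
    simp only [heq]
    rw [integral_eq_lintegral_of_nonneg_ae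
      (Filter.Eventually.of_forall fun u => by positivity)
      ((by fun_prop : Measurable (fun u => Real.exp (γ*u) * |ω u| ^ p)).aestronglyMeasurable)]
  set A := (Λ 0).toReal with hA
  have hApos : 0 < A := ENNReal.toReal_pos hΛ0pos hΛ0fin
  refine ⟨Real.exp (-(γ*T)) * A, Real.exp (γ*T) * A, by positivity, ?_, ?_⟩
  · have h : Real.exp (-(γ*T)) ≤ Real.exp (γ*T) := Real.exp_le_exp.2 (by nlinarith)
    exact mul_le_mul_of_nonneg_right h hApos.le
  intro r hr
  obtain ⟨hr0, hr1⟩ := hr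
  set L := Real.log r with hL
  have hL0 : L ≤ 0 := Real.log_nonpos hr0.le hr1
  obtain ⟨n, hn1, hn2⟩ := stmt14_floorpick T L hT hL0
  have hΛLfin : Λ L ≠ ⊤ :=
    ne_top_of_le_ne_top hΛ0fin (lintegral_mono_set (Iic_subset_Iic.2 hL0))
  have hub : (Λ L).toReal ≤ Real.exp ((n:ℝ) * (-(γ*T))) * A := by
    have h1 : Λ L ≤ q ^ n * Λ 0 := by
      rw [← hΛn n]
      exact lintegral_mono_set (Iic_subset_Iic.2 hn2)
    have h2 := (ENNReal.toReal_le_toReal hΛLfin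
      (ENNReal.mul_ne_top (ENNReal.pow_ne_top hqt) hΛ0fin)).2 h1
    rwa [ENNReal.toReal_mul, hqpow, ENNReal.toReal_ofReal (Real.exp_nonneg _)] at h2
  have hlb : Real.exp (((n:ℝ)+1) * (-(γ*T))) * A ≤ (Λ L).toReal := by
    have h1 : q ^ (n+1) * Λ 0 ≤ Λ L := by
      rw [← hΛn (n+1)]
      refine lintegral_mono_set (Iic_subset_Iic.2 ?_)
      push_cast
      linarith
    have h2 := (ENNReal.toReal_le_toReal
      (ENNReal.mul_ne_top (ENNReal.pow_ne_top hqt) hΛ0fin) hΛLfin).2 h1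
    rw [ENNReal.toReal_mul, hqpow, ENNReal.toReal_ofReal (Real.exp_nonneg _)] at h2
    push_cast at h2
    exact h2
  have hrγub : r ^ γ ≤ Real.exp (-(n:ℝ)*T*γ) := by
    have h2 : r ≤ Real.exp (-(n:ℝ)*T) := by
      calc r = Real.exp (Real.log r) := (Real.exp_log hr0).symm
        _ ≤ _ := Real.exp_le_exp.2 hn2
    calc r ^ γ ≤ (Real.exp (-(n:ℝ)*T)) ^ γ := Real.rpow_le_rpow hr0.le h2 hγ.le
      _ = Real.exp (-(n:ℝ)*T*γ) := (Real.exp_mul _ _).symm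
  have hrγlb : Real.exp (-((n:ℝ)+1)*T*γ) ≤ r ^ γ := by
    have h2 : Real.exp (-((n:ℝ)+1)*T) ≤ r := by
      calc Real.exp (-((n:ℝ)+1)*T) ≤ Real.exp (Real.log r) := Real.exp_le_exp.2 hn1.le
        _ = r := Real.exp_log hr0
    calc Real.exp (-((n:ℝ)+1)*T*γ) = (Real.exp (-((n:ℝ)+1)*T)) ^ γ := Real.exp_mul _ _
      _ ≤ r ^ γ := Real.rpow_le_rpow (Real.exp_nonneg _) h2 hγ.le
  rw [hInt r hr0, ← hL]
  constructor
  · rw [show (1/r) * (Λ L).toReal = (Λ L).toReal / r by ring, le_div_iff₀ hr0,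
      mul_assoc, ← Real.rpow_add_one hr0.ne', ← hγdef]
    calc Real.exp (-(γ*T)) * A * r ^ γ
        ≤ Real.exp (-(γ*T)) * A * Real.exp (-(n:ℝ)*T*γ) :=
          mul_le_mul_of_nonneg_left hrγub (by positivity)
      _ = Real.exp (((n:ℝ)+1) * (-(γ*T))) * A := by
          rw [mul_right_comm, ← Real.exp_add,
            show -(γ*T) + -(n:ℝ)*T*γ = ((n:ℝ)+1) * (-(γ*T)) by ring]
      _ ≤ (Λ L).toReal := hlb
  · rw [show (1/r) * (Λ L).toReal = (Λ L).toReal / r by ring, div_le_iff₀ hr0,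
      mul_assoc, ← Real.rpow_add_one hr0.ne', ← hγdef]
    calc (Λ L).toReal ≤ Real.exp ((n:ℝ) * (-(γ*T))) * A := hub
      _ = Real.exp (γ*T) * A * Real.exp (-((n:ℝ)+1)*T*γ) := by
          rw [mul_right_comm, ← Real.exp_add,
            show γ*T + -((n:ℝ)+1)*T*γ = (n:ℝ) * (-(γ*T)) by ring]
      _ ≤ Real.exp (γ*T) * A * r ^ γ :=
          mul_le_mul_of_nonneg_left hrγlb (by positivity)
end

section
/- Let α > -1 and β > 0, and for x > 0 define D(x) = ∫_0^x t^α sin(t^{-β}) dt (the primitive of the chirp t^α sin(1/t^β)). Then D(x) = (1/β) x^{α+β+1} cos(x^{-β}) + O(x^{α+2β+1}) as x → 0⁺; that is, there exist C > 0 and x₁ > 0 such that |D(x) - (1/β) x^{α+β+1} cos(x^{-β})| ≤ C x^{α+2β+1} for all 0 < x < x₁. In particular the p-exponent of the primitive of the chirp at 0 exceeds that of the chirp by β + 1 rather than by 1. -/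
open MeasureTheory

section Stmt16Helpers
open Real Set Filter intervalIntegral

private noncomputable def Gfun (α β : ℝ) : ℝ → ℝ := fun t =>
  (1/β) * (t ^ (α+β+1) * Real.cos (t ^ (-β))) +
    ((α+β+1)/β^2) * (t ^ (α+2*β+1) * Real.sin (t ^ (-β)))

private lemma chirp_integrable {r β : ℝ} (hr : -1 < r) (b : ℝ) :
    IntervalIntegrable (fun t : ℝ => t ^ r * Real.sin (t ^ (-β))) volume 0 b := by
  apply (intervalIntegral.intervalIntegrable_rpow' hr (a := 0) (b := b)).mono_fun
  · apply Measurable.aestronglyMeasurable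
    fun_prop
  · filter_upwards with t
    simp only [Real.norm_eq_abs, abs_mul]
    exact mul_le_of_le_one_right (abs_nonneg _) (Real.abs_sin_le_one _)

private lemma chirp_deriv (α β : ℝ) (hβ : 0 < β) {t : ℝ} (ht : 0 < t) :
    HasDerivAt (Gfun α β)
      (t ^ α * Real.sin (t ^ (-β)) +
        ((α+β+1)*(α+2*β+1)/β^2) * (t ^ (α+2*β) * Real.sin (t ^ (-β)))) t := by
  have hu : HasDerivAt (fun t : ℝ => t ^ (-β)) (-β * t ^ (-β - 1)) t :=
    Real.hasDerivAt_rpow_const (Or.inl ht.ne')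
  have hcos : HasDerivAt (fun t : ℝ => Real.cos (t ^ (-β)))
      (-Real.sin (t ^ (-β)) * (-β * t ^ (-β - 1))) t :=
    (Real.hasDerivAt_cos _).comp t hu
  have hsin : HasDerivAt (fun t : ℝ => Real.sin (t ^ (-β)))
      (Real.cos (t ^ (-β)) * (-β * t ^ (-β - 1))) t :=
    (Real.hasDerivAt_sin _).comp t hu
  have hA : HasDerivAt (fun t : ℝ => t ^ (α+β+1)) ((α+β+1) * t ^ (α+β)) t := by
    simpa [show α+β+1-1 = α+β by ring]
      using Real.hasDerivAt_rpow_const (p := α+β+1) (x := t) (Or.inl ht.ne')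
  have hB : HasDerivAt (fun t : ℝ => t ^ (α+2*β+1)) ((α+2*β+1) * t ^ (α+2*β)) t := by
    simpa [show α+2*β+1-1 = α+2*β by ring]
      using Real.hasDerivAt_rpow_const (p := α+2*β+1) (x := t) (Or.inl ht.ne')
  have h1 := ((hA.mul hcos).const_mul (1/β)).add ((hB.mul hsin).const_mul ((α+β+1)/β^2))
  refine h1.congr_deriv ?_
  have e1 : t ^ (α+β+1) * t ^ (-β-1) = t ^ α := by
    rw [← Real.rpow_add ht]; ring_nf
  have e2 : t ^ (α+2*β+1) * t ^ (-β-1) = t ^ (α+β) := by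
    rw [← Real.rpow_add ht]; ring_nf
  rw [← e1, ← e2]
  field_simp
  ring

private lemma Gfun_zero (α β : ℝ) (h1 : 0 < α + β + 1) (h2 : 0 < α + 2*β + 1) :
    Gfun α β 0 = 0 := by
  simp [Gfun, Real.zero_rpow h1.ne', Real.zero_rpow h2.ne']

private lemma Gfun_cont (α β x : ℝ) (hβ : 0 < β) (hα : -1 < α) (hx : 0 < x) :
    ContinuousOn (Gfun α β) (Icc 0 x) := by
  have h1 : (0:ℝ) < α + β + 1 := by linarith
  have h2 : (0:ℝ) < α + 2*β + 1 := by linarith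
  intro t ht
  rcases eq_or_lt_of_le ht.1 with h0 | h0
  · -- t = 0
    rw [← h0]
    have hc2 : (0:ℝ) ≤ (α+β+1)/β^2 := by positivity
    have hbound : ∀ s ∈ Icc (0:ℝ) x,
        |Gfun α β s| ≤ (1/β) * s ^ (α+β+1) + ((α+β+1)/β^2) * s ^ (α+2*β+1) := by
      intro s hs
      have hs0 : (0:ℝ) ≤ s := hs.1
      calc |Gfun α β s| ≤ |(1/β) * (s ^ (α+β+1) * Real.cos (s ^ (-β)))| +
            |((α+β+1)/β^2) * (s ^ (α+2*β+1) * Real.sin (s ^ (-β)))| := abs_add_le _ _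
        _ ≤ (1/β) * (s ^ (α+β+1) * 1) + ((α+β+1)/β^2) * (s ^ (α+2*β+1) * 1) := by
            rw [abs_mul, abs_mul, abs_mul, abs_mul,
              abs_of_nonneg (by positivity : (0:ℝ) ≤ 1/β), abs_of_nonneg hc2,
              abs_of_nonneg (Real.rpow_nonneg hs0 _), abs_of_nonneg (Real.rpow_nonneg hs0 _)]
            gcongr
            · exact Real.abs_cos_le_one _
            · exact Real.abs_sin_le_one _
        _ = (1/β) * s ^ (α+β+1) + ((α+β+1)/β^2) * s ^ (α+2*β+1) := by ring
    have hE : Tendsto (fun s : ℝ => (1/β) * s ^ (α+β+1) + ((α+β+1)/β^2) * s ^ (α+2*β+1))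
        (nhdsWithin 0 (Icc 0 x)) (nhds 0) := by
      have hc : ContinuousAt (fun s : ℝ => (1/β) * s ^ (α+β+1) + ((α+β+1)/β^2) * s ^ (α+2*β+1)) 0 := by
        apply ContinuousAt.add
        · exact (Real.continuousAt_rpow_const 0 _ (Or.inr h1.le)).const_mul _
        · exact (Real.continuousAt_rpow_const 0 _ (Or.inr h2.le)).const_mul _
      have h00 : (1/β) * (0:ℝ) ^ (α+β+1) + ((α+β+1)/β^2) * (0:ℝ) ^ (α+2*β+1) = 0 := by
        simp [Real.zero_rpow h1.ne', Real.zero_rpow h2.ne']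
      have hE' : Tendsto (fun s : ℝ => (1/β) * s ^ (α+β+1) + ((α+β+1)/β^2) * s ^ (α+2*β+1))
          (nhdsWithin 0 (Icc 0 x))
          (nhds ((1/β) * (0:ℝ) ^ (α+β+1) + ((α+β+1)/β^2) * (0:ℝ) ^ (α+2*β+1))) :=
        hc.continuousWithinAt
      rwa [h00] at hE'
    have hGt : Tendsto (Gfun α β) (nhdsWithin 0 (Icc 0 x)) (nhds 0) := by
      apply tendsto_of_tendsto_of_tendsto_of_le_of_le' (neg_zero (G := ℝ) ▸ hE.neg) hE
      · filter_upwards [eventually_mem_nhdsWithin] with s hs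
        exact neg_le_of_abs_le (hbound s hs)
      · filter_upwards [eventually_mem_nhdsWithin] with s hs
        exact le_of_abs_le (hbound s hs)
    unfold ContinuousWithinAt
    rw [Gfun_zero α β h1 h2]
    exact hGt
  · exact (chirp_deriv α β hβ h0).continuousAt.continuousWithinAt

end Stmt16Helpers

/-- asymptotics of the primitive of the chirp: for `α > -1`, `β > 0`,
`∫_0^x t^α sin(t^{-β}) dt = (1/β) x^{α+β+1} cos(x^{-β}) + O(x^{α+2β+1})` as `x → 0⁺`. -/
theorem stmt16 (α β : ℝ) (hα : -1 < α) (hβ : 0 < β) :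
    ∃ C : ℝ, 0 < C ∧ ∃ x₁ : ℝ, 0 < x₁ ∧ ∀ x : ℝ, 0 < x → x < x₁ →
      |(∫ t in (0 : ℝ)..x, t ^ α * Real.sin (t ^ (-β))) -
          (1 / β) * x ^ (α + β + 1) * Real.cos (x ^ (-β))|
        ≤ C * x ^ (α + 2 * β + 1) := by
  have h1 : (0:ℝ) < α + β + 1 := by linarith
  have h2 : (0:ℝ) < α + 2*β + 1 := by linarith
  set K := (α+β+1)*(α+2*β+1)/β^2 with hK
  refine ⟨(α+β+1)/β^2 + |K| / (α+2*β+1), by positivity, 1, one_pos, ?_⟩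
  intro x hx _
  have hint_f : IntervalIntegrable (fun t : ℝ => t ^ α * Real.sin (t ^ (-β))) volume 0 x :=
    chirp_integrable hα x
  have hint_h : IntervalIntegrable (fun t : ℝ => t ^ (α+2*β) * Real.sin (t ^ (-β))) volume 0 x :=
    chirp_integrable (by linarith) x
  have hint_g : IntervalIntegrable (fun t : ℝ =>
      t ^ α * Real.sin (t ^ (-β)) + K * (t ^ (α+2*β) * Real.sin (t ^ (-β)))) volume 0 x :=
    hint_f.add (hint_h.const_mul K)
  have hFTC := intervalIntegral.integral_eq_sub_of_hasDeriv_right_of_le hx.le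
    (Gfun_cont α β x hβ hα hx)
    (fun t ht => (chirp_deriv α β hβ ht.1).hasDerivWithinAt) hint_g
  rw [intervalIntegral.integral_add hint_f (hint_h.const_mul K),
    intervalIntegral.integral_const_mul, Gfun_zero α β h1 h2, sub_zero] at hFTC
  have hGx : Gfun α β x = (1/β) * (x ^ (α+β+1) * Real.cos (x ^ (-β))) +
      ((α+β+1)/β^2) * (x ^ (α+2*β+1) * Real.sin (x ^ (-β))) := rfl
  have key : (∫ t in (0:ℝ)..x, t ^ α * Real.sin (t ^ (-β))) -
      (1/β) * x ^ (α+β+1) * Real.cos (x ^ (-β))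
      = ((α+β+1)/β^2) * (x ^ (α+2*β+1) * Real.sin (x ^ (-β))) -
        K * ∫ t in (0:ℝ)..x, t ^ (α+2*β) * Real.sin (t ^ (-β)) := by
    rw [hGx] at hFTC; linarith [hFTC]
  have hIh : |∫ t in (0:ℝ)..x, t ^ (α+2*β) * Real.sin (t ^ (-β))|
      ≤ x ^ (α+2*β+1) / (α+2*β+1) := by
    have hb1 : |∫ t in (0:ℝ)..x, t ^ (α+2*β) * Real.sin (t ^ (-β))|
        ≤ ∫ t in (0:ℝ)..x, |t ^ (α+2*β) * Real.sin (t ^ (-β))| := by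
      simpa only [Real.norm_eq_abs] using
        intervalIntegral.norm_integral_le_integral_norm
          (f := fun t : ℝ => t ^ (α+2*β) * Real.sin (t ^ (-β))) hx.le
    have hb2 : (∫ t in (0:ℝ)..x, |t ^ (α+2*β) * Real.sin (t ^ (-β))|)
        ≤ ∫ t in (0:ℝ)..x, t ^ (α+2*β) := by
      apply intervalIntegral.integral_mono_on hx.le hint_h.abs
        (intervalIntegral.intervalIntegrable_rpow' (by linarith))
      intro t ht
      rw [abs_mul, abs_of_nonneg (Real.rpow_nonneg ht.1 _)]
      exact mul_le_of_le_one_right (Real.rpow_nonneg ht.1 _) (Real.abs_sin_le_one _)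
    have hb3 : (∫ t in (0:ℝ)..x, t ^ (α+2*β)) = x ^ (α+2*β+1) / (α+2*β+1) := by
      rw [integral_rpow (Or.inl (by linarith))]
      simp [Real.zero_rpow h2.ne']
    linarith
  calc |(∫ t in (0:ℝ)..x, t ^ α * Real.sin (t ^ (-β))) -
      (1/β) * x ^ (α+β+1) * Real.cos (x ^ (-β))|
      = |((α+β+1)/β^2) * (x ^ (α+2*β+1) * Real.sin (x ^ (-β))) -
        K * ∫ t in (0:ℝ)..x, t ^ (α+2*β) * Real.sin (t ^ (-β))| := by rw [key]
    _ ≤ |((α+β+1)/β^2) * (x ^ (α+2*β+1) * Real.sin (x ^ (-β)))| +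
        |K * ∫ t in (0:ℝ)..x, t ^ (α+2*β) * Real.sin (t ^ (-β))| := abs_sub _ _
    _ ≤ ((α+β+1)/β^2) * x ^ (α+2*β+1) + |K| * (x ^ (α+2*β+1) / (α+2*β+1)) := by
        apply add_le_add
        · rw [abs_mul, abs_mul, abs_of_nonneg (by positivity : (0:ℝ) ≤ (α+β+1)/β^2),
            abs_of_nonneg (Real.rpow_nonneg hx.le _)]
          calc ((α+β+1)/β^2) * (x ^ (α+2*β+1) * |Real.sin (x ^ (-β))|)
              ≤ ((α+β+1)/β^2) * (x ^ (α+2*β+1) * 1) := by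
                gcongr; exact Real.abs_sin_le_one _
            _ = ((α+β+1)/β^2) * x ^ (α+2*β+1) := by ring
        · rw [abs_mul]
          exact mul_le_mul_of_nonneg_left hIh (abs_nonneg _)
    _ = ((α+β+1)/β^2 + |K| / (α+2*β+1)) * x ^ (α+2*β+1) := by
        field_simp
end

section
/- Let γ > 1 and α ∈ ℝ with α + γ > 0, let F_{α,γ} be the lacunary comb, and define G(x) = ∫_0^x F_{α,γ}(t) dt (so G(x) = 0 for x ≤ 0). Then the Hölder exponent of G at 0 equals α + γ. -/
open MeasureTheory

/-- `X ∈ C^α(x0)`. -/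
def HolderAt (X : ℝ → ℝ) (x0 α : ℝ) : Prop :=
  ∃ C : ℝ, 0 < C ∧ ∃ P : Polynomial ℝ,
    (P = 0 ∨ (P.natDegree : ℝ) < α) ∧
    ∃ δ : ℝ, 0 < δ ∧ ∀ x : ℝ, |x - x0| < δ → |X x - P.eval x| ≤ C * |x - x0| ^ α

/-- The Hölder exponent of `X` at `x0`: `h(x0) = sup {α ≥ 0 : X ∈ C^α(x0)}`. -/
noncomputable def holderExponent (X : ℝ → ℝ) (x0 : ℝ) : EReal :=
  sSup (Real.toEReal '' {α : ℝ | 0 ≤ α ∧ HolderAt X x0 α})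

namespace Stmt17

open Set Filter Topology
open scoped ENNReal NNReal

noncomputable def cterm (α γ : ℝ) (j : ℕ) (t : ℝ) : ℝ :=
  if 1 ≤ j ∧ (2 : ℝ) ^ (-(j : ℝ)) ≤ t ∧ t ≤ (2 : ℝ) ^ (-(j : ℝ)) + (2 : ℝ) ^ (-γ * (j : ℝ))
  then (2 : ℝ) ^ (-α * (j : ℝ)) else 0

theorem comb_eq_tsum (α γ t : ℝ) : comb α γ t = ∑' j, cterm α γ j t := rfl

noncomputable def cset (γ : ℝ) (j : ℕ) : Set ℝ :=
  if 1 ≤ j then Icc ((2:ℝ)^(-(j:ℝ))) ((2:ℝ)^(-(j:ℝ)) + (2:ℝ)^(-γ*(j:ℝ))) else ∅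

theorem cterm_eq (α γ : ℝ) (j : ℕ) (t : ℝ) :
    cterm α γ j t = (cset γ j).indicator (fun _ => (2:ℝ)^(-α*(j:ℝ))) t := by
  by_cases hj : 1 ≤ j <;>
    simp [cterm, cset, hj, Set.indicator_apply, Set.mem_Icc, and_assoc]

theorem measurableSet_cset (γ : ℝ) (j : ℕ) : MeasurableSet (cset γ j) := by
  unfold cset; split_ifs
  · exact measurableSet_Icc
  · exact MeasurableSet.empty

theorem cterm_nonneg (α γ : ℝ) (j : ℕ) (t : ℝ) : 0 ≤ cterm α γ j t := by
  unfold cterm; split_ifs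
  · positivity
  · exact le_refl 0

theorem comb_zero (α γ : ℝ) {t : ℝ} (ht : t ≤ 0) : comb α γ t = 0 := by
  rw [comb_eq_tsum]
  convert tsum_zero with j
  unfold cterm
  rw [if_neg]
  rintro ⟨-, h1, -⟩
  have : (0:ℝ) < (2:ℝ) ^ (-(j:ℝ)) := Real.rpow_pos_of_pos two_pos _
  linarith

/-- Part 1: the primitive vanishes on the left of 0. -/
theorem G_zero (α γ : ℝ) {x : ℝ} (hx : x ≤ 0) :
    (∫ t in (0:ℝ)..x, comb α γ t) = 0 := by
  have heq : Set.EqOn (comb α γ) (fun _ => (0:ℝ)) (Set.uIcc (0:ℝ) x) := by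
    intro t ht
    rw [Set.uIcc_of_ge hx] at ht
    exact comb_zero α γ ht.2
  rw [intervalIntegral.integral_congr heq, intervalIntegral.integral_zero]

theorem volume_cset_le (γ : ℝ) (j : ℕ) :
    volume (cset γ j) ≤ ENNReal.ofReal ((2:ℝ)^(-γ*(j:ℝ))) := by
  unfold cset; split_ifs
  · rw [Real.volume_Icc]
    simp
  · simp

/-- `r = 2^{-(α+γ)}`. -/
noncomputable def rr (α γ : ℝ) : ℝ := (2:ℝ) ^ (-(α+γ))

theorem rr_pos (α γ : ℝ) : 0 < rr α γ := Real.rpow_pos_of_pos two_pos _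

theorem rr_lt_one (α γ : ℝ) (h : 0 < α + γ) : rr α γ < 1 :=
  Real.rpow_lt_one_of_one_lt_of_neg one_lt_two (by linarith)

theorem cw_eq (α γ : ℝ) (j : ℕ) :
    (2:ℝ)^(-α*(j:ℝ)) * (2:ℝ)^(-γ*(j:ℝ)) = rr α γ ^ j := by
  rw [← Real.rpow_natCast (rr α γ) j, rr, ← Real.rpow_add two_pos,
    ← Real.rpow_mul (by norm_num : (0:ℝ) ≤ 2)]
  ring_nf

theorem integral_cterm (α γ x : ℝ) (j : ℕ) :
    ∫ t in Ioc (0:ℝ) x, cterm α γ j t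
      = (2:ℝ)^(-α*(j:ℝ)) * (volume (cset γ j ∩ Ioc 0 x)).toReal := by
  have : ∀ t, cterm α γ j t = (cset γ j).indicator (fun _ => (2:ℝ)^(-α*(j:ℝ))) t :=
    cterm_eq α γ j
  simp only [this]
  rw [integral_indicator_const _ (measurableSet_cset γ j), measureReal_def,
    Measure.restrict_apply (measurableSet_cset γ j)]
  rw [smul_eq_mul, mul_comm]

theorem integral_cterm_nonneg (α γ x : ℝ) (j : ℕ) :
    0 ≤ ∫ t in Ioc (0:ℝ) x, cterm α γ j t :=
  integral_nonneg (fun t => cterm_nonneg α γ j t)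

theorem integral_cterm_le (α γ x : ℝ) (j : ℕ) :
    ∫ t in Ioc (0:ℝ) x, cterm α γ j t ≤ rr α γ ^ j := by
  rw [integral_cterm, ← cw_eq]
  have hc : (0:ℝ) < (2:ℝ)^(-α*(j:ℝ)) := Real.rpow_pos_of_pos two_pos _
  have hw : (0:ℝ) ≤ (2:ℝ)^(-γ*(j:ℝ)) := (Real.rpow_pos_of_pos two_pos _).le
  refine mul_le_mul_of_nonneg_left ?_ hc.le
  have h1 : volume (cset γ j ∩ Ioc 0 x) ≤ ENNReal.ofReal ((2:ℝ)^(-γ*(j:ℝ))) :=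
    le_trans (measure_mono Set.inter_subset_left) (volume_cset_le γ j)
  calc (volume (cset γ j ∩ Ioc 0 x)).toReal
      ≤ (ENNReal.ofReal ((2:ℝ)^(-γ*(j:ℝ)))).toReal :=
        ENNReal.toReal_mono ENNReal.ofReal_ne_top h1
    _ = (2:ℝ)^(-γ*(j:ℝ)) := ENNReal.toReal_ofReal hw

theorem summable_integral_cterm (α γ x : ℝ) (h : 0 < α + γ) :
    Summable (fun j => ∫ t in Ioc (0:ℝ) x, cterm α γ j t) :=
  Summable.of_nonneg_of_le (integral_cterm_nonneg α γ x) (integral_cterm_le α γ x)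
    (summable_geometric_of_lt_one (rr_pos α γ).le (rr_lt_one α γ h))

theorem G_eq (α γ : ℝ) (h : 0 < α + γ) {x : ℝ} (hx : 0 ≤ x) :
    (∫ t in (0:ℝ)..x, comb α γ t) = ∑' j, ∫ t in Ioc (0:ℝ) x, cterm α γ j t := by
  rw [intervalIntegral.integral_of_le hx]
  have hmeas : ∀ j : ℕ,
      AEStronglyMeasurable (cterm α γ j) (volume.restrict (Ioc (0:ℝ) x)) := by
    intro j
    have : cterm α γ j = (cset γ j).indicator (fun _ => (2:ℝ)^(-α*(j:ℝ))) :=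
      funext (cterm_eq α γ j)
    rw [this]
    exact ((measurable_const.indicator (measurableSet_cset γ j)).aestronglyMeasurable)
  have hb : ∀ j : ℕ, ∫⁻ t, ‖cterm α γ j t‖₊ ∂(volume.restrict (Ioc (0:ℝ) x))
      ≤ ENNReal.ofReal (rr α γ ^ j) := by
    intro j
    have hc : (0:ℝ) ≤ (2:ℝ)^(-α*(j:ℝ)) := (Real.rpow_pos_of_pos two_pos _).le
    have hpt : ∀ t, (‖cterm α γ j t‖₊ : ℝ≥0∞)
        ≤ (cset γ j).indicator (fun _ => ENNReal.ofReal ((2:ℝ)^(-α*(j:ℝ)))) t := by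
      intro t
      rw [cterm_eq α γ j t]
      by_cases ht : t ∈ cset γ j
      · simp only [Set.indicator_of_mem ht]
        exact (Real.enorm_eq_ofReal hc).le
      · simp [Set.indicator_of_notMem ht]
    calc ∫⁻ t, ‖cterm α γ j t‖₊ ∂(volume.restrict (Ioc (0:ℝ) x))
        ≤ ∫⁻ t, (cset γ j).indicator (fun _ => ENNReal.ofReal ((2:ℝ)^(-α*(j:ℝ)))) t
            ∂(volume.restrict (Ioc (0:ℝ) x)) := lintegral_mono hpt
      _ = ENNReal.ofReal ((2:ℝ)^(-α*(j:ℝ)))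
            * (volume.restrict (Ioc (0:ℝ) x)) (cset γ j) := by
          rw [lintegral_indicator (measurableSet_cset γ j)]
          simp [lintegral_const, Measure.restrict_restrict (measurableSet_cset γ j)]
      _ ≤ ENNReal.ofReal ((2:ℝ)^(-α*(j:ℝ))) * ENNReal.ofReal ((2:ℝ)^(-γ*(j:ℝ))) := by
          gcongr
          rw [Measure.restrict_apply (measurableSet_cset γ j)]
          exact le_trans (measure_mono Set.inter_subset_left) (volume_cset_le γ j)
      _ = ENNReal.ofReal (rr α γ ^ j) := by
          rw [← ENNReal.ofReal_mul hc, cw_eq]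
  have hsum : Summable (fun j : ℕ => rr α γ ^ j) :=
    summable_geometric_of_lt_one (rr_pos α γ).le (rr_lt_one α γ h)
  have hfin : (∑' j : ℕ, ∫⁻ t, ‖cterm α γ j t‖₊ ∂(volume.restrict (Ioc (0:ℝ) x))) ≠ ⊤ := by
    refine ne_of_lt (lt_of_le_of_lt (ENNReal.tsum_le_tsum hb) ?_)
    rw [← ENNReal.ofReal_tsum_of_nonneg (fun j => pow_nonneg (rr_pos α γ).le j) hsum]
    exact ENNReal.ofReal_lt_top
  calc ∫ t in Ioc (0:ℝ) x, comb α γ t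
      = ∫ t in Ioc (0:ℝ) x, ∑' j, cterm α γ j t := by simp only [comb_eq_tsum]
    _ = ∑' j, ∫ t in Ioc (0:ℝ) x, cterm α γ j t := integral_tsum hmeas hfin

theorem rr_pow (α γ : ℝ) (j : ℕ) : rr α γ ^ j = (2:ℝ) ^ (-(α+γ) * (j:ℝ)) := by
  rw [← Real.rpow_natCast (rr α γ) j, rr, ← Real.rpow_mul (by norm_num : (0:ℝ) ≤ 2)]

theorem two_rpow_neg_natCast (n : ℕ) : (2:ℝ) ^ (-(n:ℝ)) = ((1:ℝ)/2) ^ n := by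
  rw [Real.rpow_neg (by norm_num), Real.rpow_natCast, one_div, inv_pow]

theorem tsum_tail (r : ℝ) (hr0 : 0 ≤ r) (hr1 : r < 1) (j0 : ℕ) :
    ∑' j : ℕ, (if j0 ≤ j then r ^ j else 0) = r ^ j0 * (1 - r)⁻¹ := by
  have hinj : Function.Injective (fun k : ℕ => k + j0) := fun a b hab => by
    simp only [] at hab; omega
  have hsupp : Function.support (fun j : ℕ => if j0 ≤ j then r ^ j else 0)
      ⊆ Set.range (fun k : ℕ => k + j0) := by
    intro j hj
    simp only [Function.mem_support] at hj
    by_cases hle : j0 ≤ j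
    · exact ⟨j - j0, by simp only []; omega⟩
    · exact absurd (if_neg hle) hj
  rw [← Function.Injective.tsum_eq hinj hsupp]
  have hk : ∀ k : ℕ, (if j0 ≤ k + j0 then r ^ (k + j0) else 0) = r ^ j0 * r ^ k := by
    intro k
    rw [if_pos (Nat.le_add_left _ _), pow_add]
    ring
  simp only [hk]
  rw [tsum_mul_left, tsum_geometric_of_lt_one hr0 hr1]

theorem summable_tail (r : ℝ) (hr0 : 0 ≤ r) (hr1 : r < 1) (j0 : ℕ) :
    Summable (fun j : ℕ => if j0 ≤ j then r ^ j else 0) := by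
  refine Summable.of_nonneg_of_le (fun j => ?_) (fun j => ?_)
    (summable_geometric_of_lt_one hr0 hr1)
  · split_ifs <;> positivity
  · split_ifs
    · exact le_rfl
    · positivity

theorem G_nonneg (α γ : ℝ) (h : 0 < α + γ) {x : ℝ} (hx : 0 ≤ x) :
    0 ≤ ∫ t in (0:ℝ)..x, comb α γ t := by
  rw [G_eq α γ h hx]
  exact tsum_nonneg fun j => integral_cterm_nonneg α γ x j

theorem G_le (α γ : ℝ) (h : 0 < α + γ) {x : ℝ} (hx : 0 < x) :
    (∫ t in (0:ℝ)..x, comb α γ t) ≤ (1 - rr α γ)⁻¹ * x ^ (α + γ) := by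
  have hex : ∃ n : ℕ, (2:ℝ) ^ (-(n:ℝ)) ≤ x := by
    obtain ⟨n, hn⟩ := exists_pow_lt_of_lt_one hx (by norm_num : (1:ℝ)/2 < 1)
    exact ⟨n, le_of_lt (by rw [two_rpow_neg_natCast]; exact hn)⟩
  set j0 := Nat.find hex with hj0def
  have hj0 : (2:ℝ) ^ (-(j0:ℝ)) ≤ x := Nat.find_spec hex
  have hterm : ∀ j : ℕ,
      (∫ t in Ioc (0:ℝ) x, cterm α γ j t) ≤ (if j0 ≤ j then rr α γ ^ j else 0) := by
    intro j
    by_cases hle : j0 ≤ j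
    · rw [if_pos hle]; exact integral_cterm_le α γ x j
    · rw [if_neg hle]
      have hxj : x < (2:ℝ) ^ (-(j:ℝ)) :=
        lt_of_not_ge (Nat.find_min hex (lt_of_not_ge hle))
      have hempty : cset γ j ∩ Ioc 0 x = ∅ := by
        ext t
        simp only [Set.mem_inter_iff, Set.mem_empty_iff_false, iff_false]
        rintro ⟨ht1, ht2⟩
        unfold cset at ht1
        split_ifs at ht1 with h1
        · exact absurd ht2.2 (not_le.mpr (lt_of_lt_of_le hxj ht1.1))
        · exact ht1
      rw [integral_cterm, hempty]
      simp
  rw [G_eq α γ h hx.le]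
  refine le_trans (Summable.tsum_le_tsum hterm (summable_integral_cterm α γ x h)
    (summable_tail _ (rr_pos α γ).le (rr_lt_one α γ h) j0)) ?_
  rw [tsum_tail _ (rr_pos α γ).le (rr_lt_one α γ h) j0]
  have h1 : rr α γ ^ j0 ≤ x ^ (α+γ) := by
    have e1 : rr α γ ^ j0 = ((2:ℝ) ^ (-(j0:ℝ))) ^ (α+γ) := by
      rw [rr_pow, ← Real.rpow_mul (by norm_num : (0:ℝ) ≤ 2)]
      ring_nf
    rw [e1]
    exact Real.rpow_le_rpow (Real.rpow_pos_of_pos two_pos _).le hj0 h.le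
  have h2 : (0:ℝ) ≤ (1 - rr α γ)⁻¹ :=
    inv_nonneg.mpr (sub_nonneg.mpr (rr_lt_one α γ h).le)
  calc rr α γ ^ j0 * (1 - rr α γ)⁻¹ ≤ x ^ (α+γ) * (1 - rr α γ)⁻¹ :=
        mul_le_mul_of_nonneg_right h1 h2
    _ = (1 - rr α γ)⁻¹ * x ^ (α+γ) := mul_comm _ _

theorem G_lower (α γ : ℝ) (h : 0 < α + γ) (j : ℕ) (hj : 1 ≤ j) :
    rr α γ ^ j ≤ ∫ t in (0:ℝ)..((2:ℝ)^(-(j:ℝ)) + (2:ℝ)^(-γ*(j:ℝ))), comb α γ t := by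
  set x := (2:ℝ)^(-(j:ℝ)) + (2:ℝ)^(-γ*(j:ℝ)) with hxdef
  have hx : 0 < x := by positivity
  rw [G_eq α γ h hx.le]
  have hsub : cset γ j ⊆ Ioc 0 x := by
    unfold cset
    rw [if_pos hj]
    rintro t ⟨ht1, ht2⟩
    exact ⟨lt_of_lt_of_le (Real.rpow_pos_of_pos two_pos _) ht1, ht2⟩
  have hval : (∫ t in Ioc (0:ℝ) x, cterm α γ j t) = rr α γ ^ j := by
    rw [integral_cterm, Set.inter_eq_self_of_subset_left hsub]
    unfold cset
    rw [if_pos hj, Real.volume_Icc, add_sub_cancel_left,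
      ENNReal.toReal_ofReal (Real.rpow_pos_of_pos two_pos _).le, cw_eq]
  rw [← hval]
  exact Summable.le_tsum (summable_integral_cterm α γ x h) j
    (fun i _ => integral_cterm_nonneg α γ x i)

theorem eval_zero_of_bound (P : Polynomial ℝ) {C β δ : ℝ} (hδ : 0 < δ) (hβ : 0 < β)
    (hb : ∀ x ∈ Ioo (-δ) (0:ℝ), |P.eval x| ≤ C * |x| ^ β) : P.eval 0 = 0 := by
  have l1 : Tendsto (fun x : ℝ => |P.eval x|) (𝓝[<] (0:ℝ)) (𝓝 |P.eval 0|) :=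
    ((P.continuous_aeval.abs.tendsto 0)).mono_left nhdsWithin_le_nhds
  have l2 : Tendsto (fun x : ℝ => C * |x| ^ β) (𝓝[<] (0:ℝ)) (𝓝 0) := by
    have hc : ContinuousAt (fun x : ℝ => C * |x| ^ β) 0 := by
      apply ContinuousAt.mul continuousAt_const
      exact (continuous_abs.continuousAt).rpow_const (Or.inr hβ.le)
    have h0 : C * |(0:ℝ)| ^ β = 0 := by
      simp [Real.zero_rpow hβ.ne']
    have := hc.tendsto.mono_left (nhdsWithin_le_nhds (s := Iio (0:ℝ)))
    rwa [h0] at this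
  have hev : ∀ᶠ x in 𝓝[<] (0:ℝ), |P.eval x| ≤ C * |x| ^ β := by
    filter_upwards [Ioo_mem_nhdsLT_of_mem
      (⟨by linarith, le_rfl⟩ : (0:ℝ) ∈ Ioc (-δ) 0)] with x hx
    exact hb x hx
  have hle := le_of_tendsto_of_tendsto l1 l2 hev
  exact abs_eq_zero.mp (le_antisymm hle (abs_nonneg _))

theorem poly_zero (n : ℕ) : ∀ (P : Polynomial ℝ) (C β δ : ℝ), 0 < δ →
    P.natDegree ≤ n → (n : ℝ) < β →
    (∀ x ∈ Ioo (-δ) (0:ℝ), |P.eval x| ≤ C * |x| ^ β) → P = 0 := by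
  induction n with
  | zero =>
    intro P C β δ hδ hdeg hβ hb
    have hβ0 : (0:ℝ) < β := by exact_mod_cast hβ
    have h0 : P.eval 0 = 0 := eval_zero_of_bound P hδ hβ0 hb
    rw [Polynomial.eq_C_of_natDegree_le_zero hdeg,
      Polynomial.coeff_zero_eq_eval_zero, h0, map_zero]
  | succ n ih =>
    intro P C β δ hδ hdeg hβ hb
    have hβ0 : (0:ℝ) < β := lt_of_le_of_lt (by positivity) hβ
    have h0 : P.eval 0 = 0 := eval_zero_of_bound P hδ hβ0 hb
    obtain ⟨Q, hQ⟩ : Polynomial.X ∣ P :=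
      Polynomial.X_dvd_iff.mpr (by rw [Polynomial.coeff_zero_eq_eval_zero, h0])
    by_cases hQ0 : Q = 0
    · rw [hQ, hQ0, mul_zero]
    have hdQ : Q.natDegree ≤ n := by
      have hX : (Polynomial.X : Polynomial ℝ) ≠ 0 := Polynomial.X_ne_zero
      have := Polynomial.natDegree_mul hX hQ0
      rw [hQ, this, Polynomial.natDegree_X] at hdeg
      omega
    have hbQ : ∀ x ∈ Ioo (-(min δ 1)) (0:ℝ), |Q.eval x| ≤ C * |x| ^ (β - 1) := by
      intro x hx
      have hx0 : x < 0 := hx.2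
      have hxδ : -δ < x := lt_of_le_of_lt (by simp [neg_le_neg_iff, min_le_left]) hx.1
      have hxa : 0 < |x| := abs_pos.mpr hx0.ne
      have hsplit : |x| ^ β = |x| * |x| ^ (β - 1) := by
        rw [show β = 1 + (β - 1) by ring, Real.rpow_add hxa, Real.rpow_one]
        ring_nf
      have hbx := hb x ⟨hxδ, hx0⟩
      rw [hQ, Polynomial.eval_mul, Polynomial.eval_X, abs_mul, hsplit] at hbx
      have := (mul_le_mul_iff_right₀ hxa).mp (by linarith [hbx] : |x| * |Q.eval x| ≤ |x| * (C * |x| ^ (β - 1)))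
      exact this
    have hQz : Q = 0 := ih Q C (β - 1) (min δ 1) (lt_min hδ one_pos) hdQ
      (by push_cast at hβ ⊢; linarith) hbQ
    rw [hQ, hQz, mul_zero]


end Stmt17

/-- for `γ > 1` and `α + γ > 0`, the primitive `G(x) = ∫_0^x F_{α,γ}` of the
lacunary comb vanishes for `x ≤ 0` and has Hölder exponent `α + γ` at `0`. -/
theorem stmt17 (α γ : ℝ) (hγ : 1 < γ) (h : 0 < α + γ) :
    (∀ x : ℝ, x ≤ 0 → (∫ t in (0 : ℝ)..x, comb α γ t) = 0) ∧
    holderExponent (fun x => ∫ t in (0 : ℝ)..x, comb α γ t) 0 =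
      ((α + γ : ℝ) : EReal) := by
  open Stmt17 Set in
  refine ⟨fun x hx => G_zero α γ hx, le_antisymm ?_ ?_⟩
  · -- upper bound on the exponent
    apply sSup_le
    rintro y ⟨β, ⟨hβ0, C, hC, P, hP, δ, hδ, hHb⟩, rfl⟩
    show (β : EReal) ≤ ((α + γ : ℝ) : EReal)
    rw [EReal.coe_le_coe_iff]
    by_contra hcon
    have hs : α + γ < β := lt_of_not_ge hcon
    have hβpos : 0 < β := lt_trans h hs
    -- the polynomial is zero
    have hPz : P = 0 := by
      rcases hP with hP | hP
      · exact hP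
      · refine poly_zero P.natDegree P C β δ hδ le_rfl hP (fun x hx => ?_)
        have hx1 : |x - 0| < δ := by
          rw [sub_zero, abs_lt]
          exact ⟨hx.1, lt_of_lt_of_le hx.2 hδ.le⟩
        have hGz : (∫ t in (0:ℝ)..x, comb α γ t) = 0 := G_zero α γ hx.2.le
        have := hHb x hx1
        simp only [hGz, zero_sub, abs_neg, sub_zero] at this
        exact this
    have hb' : ∀ x : ℝ, |x| < δ → |∫ t in (0:ℝ)..x, comb α γ t| ≤ C * |x| ^ β := by
      intro x hx
      have := hHb x (by rwa [sub_zero])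
      simpa [hPz, sub_zero] using this
    -- choose a large index j
    have hbase : 1 < (2:ℝ) ^ (β - (α + γ)) :=
      (Real.one_lt_rpow_iff_of_pos two_pos).mpr
        (Or.inl ⟨one_lt_two, sub_pos.mpr hs⟩)
    obtain ⟨n1, hn1⟩ := pow_unbounded_of_one_lt (C * (2:ℝ) ^ β) hbase
    obtain ⟨n2, hn2⟩ : ∃ n : ℕ, (2:ℝ) ^ (1 - (n:ℝ)) < δ := by
      obtain ⟨n, hn⟩ := exists_pow_lt_of_lt_one (half_pos hδ) (by norm_num : (1:ℝ)/2 < 1)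
      refine ⟨n, ?_⟩
      have he : (2:ℝ) ^ (1 - (n:ℝ)) = 2 * ((1:ℝ)/2) ^ n := by
        rw [show (1 - (n:ℝ)) = 1 + (-(n:ℝ)) by ring, Real.rpow_add two_pos,
          Real.rpow_one, two_rpow_neg_natCast]
      rw [he]; linarith
    set j := max (max n1 n2) 1 with hjdef
    have hj1 : 1 ≤ j := le_max_right _ _
    have hjn1 : n1 ≤ j := le_trans (le_max_left _ _) (le_max_left _ _)
    have hjn2 : n2 ≤ j := le_trans (le_max_right _ _) (le_max_left _ _)
    set x := (2:ℝ) ^ (-(j:ℝ)) + (2:ℝ) ^ (-γ * (j:ℝ)) with hxdef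
    have hxpos : 0 < x := by positivity
    have hxle : x ≤ (2:ℝ) ^ (1 - (j:ℝ)) := by
      have h1 : (2:ℝ) ^ (-γ * (j:ℝ)) ≤ (2:ℝ) ^ (-(j:ℝ)) := by
        apply Real.rpow_le_rpow_of_exponent_le one_le_two
        have hjr : (1:ℝ) ≤ (j:ℝ) := by exact_mod_cast hj1
        nlinarith
      have h2 : (2:ℝ) ^ (1 - (j:ℝ)) = 2 * (2:ℝ) ^ (-(j:ℝ)) := by
        rw [show (1 - (j:ℝ)) = 1 + (-(j:ℝ)) by ring, Real.rpow_add two_pos, Real.rpow_one]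
      rw [h2, hxdef]; linarith
    have hxδ : x < δ := by
      have hmono : (2:ℝ) ^ (1 - (j:ℝ)) ≤ (2:ℝ) ^ (1 - (n2:ℝ)) := by
        apply Real.rpow_le_rpow_of_exponent_le one_le_two
        have : (n2:ℝ) ≤ (j:ℝ) := by exact_mod_cast hjn2
        linarith
      linarith
    have hlow : rr α γ ^ j ≤ ∫ t in (0:ℝ)..x, comb α γ t := G_lower α γ h j hj1
    have hGpos : 0 ≤ ∫ t in (0:ℝ)..x, comb α γ t := G_nonneg α γ h hxpos.le
    have key1 : rr α γ ^ j ≤ C * x ^ β := by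
      have := hb' x (by rwa [abs_of_pos hxpos])
      rw [abs_of_nonneg hGpos, abs_of_pos hxpos] at this
      linarith
    have key2 : C * x ^ β < rr α γ ^ j := by
      have c1 : C * x ^ β ≤ C * ((2:ℝ) ^ (1 - (j:ℝ))) ^ β :=
        mul_le_mul_of_nonneg_left (Real.rpow_le_rpow hxpos.le hxle hβpos.le) hC.le
      have c2 : ((2:ℝ) ^ (1 - (j:ℝ))) ^ β = (2:ℝ) ^ β * (2:ℝ) ^ (-(j:ℝ) * β) := by
        rw [← Real.rpow_mul (by norm_num : (0:ℝ) ≤ 2), ← Real.rpow_add two_pos]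
        congr 1; ring
      have c3 : ((2:ℝ) ^ (β - (α+γ))) ^ n1 ≤ ((2:ℝ) ^ (β - (α+γ))) ^ j :=
        pow_le_pow_right₀ hbase.le hjn1
      have c4 : ((2:ℝ) ^ (β - (α+γ))) ^ j = (2:ℝ) ^ ((β - (α+γ)) * (j:ℝ)) := by
        rw [← Real.rpow_natCast ((2:ℝ) ^ (β - (α+γ))) j,
          ← Real.rpow_mul (by norm_num : (0:ℝ) ≤ 2)]
      have c5 : (2:ℝ) ^ ((β - (α+γ)) * (j:ℝ)) * (2:ℝ) ^ (-(j:ℝ) * β)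
          = (2:ℝ) ^ (-(α+γ) * (j:ℝ)) := by
        rw [← Real.rpow_add two_pos]; congr 1; ring
      have hpos : (0:ℝ) < (2:ℝ) ^ (-(j:ℝ) * β) := Real.rpow_pos_of_pos two_pos _
      calc C * x ^ β ≤ C * ((2:ℝ) ^ (1 - (j:ℝ))) ^ β := c1
        _ = (C * (2:ℝ) ^ β) * (2:ℝ) ^ (-(j:ℝ) * β) := by rw [c2]; ring
        _ < ((2:ℝ) ^ (β - (α+γ))) ^ n1 * (2:ℝ) ^ (-(j:ℝ) * β) :=
            mul_lt_mul_of_pos_right hn1 hpos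
        _ ≤ ((2:ℝ) ^ (β - (α+γ))) ^ j * (2:ℝ) ^ (-(j:ℝ) * β) :=
            mul_le_mul_of_nonneg_right c3 hpos.le
        _ = (2:ℝ) ^ (-(α+γ) * (j:ℝ)) := by rw [c4, c5]
        _ = rr α γ ^ j := (rr_pow α γ j).symm
    linarith
  · -- lower bound: HolderAt with exponent α + γ
    apply le_sSup
    refine ⟨α + γ, ⟨h.le, (1 - rr α γ)⁻¹,
      inv_pos.mpr (sub_pos.mpr (rr_lt_one α γ h)), 0, Or.inl rfl, 1, one_pos, ?_⟩, rfl⟩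
    intro x hx
    simp only [Polynomial.eval_zero, sub_zero]
    rcases le_or_gt x 0 with hx0 | hx0
    · rw [G_zero α γ hx0, abs_zero]
      have : (0:ℝ) ≤ (1 - rr α γ)⁻¹ * |x| ^ (α + γ) :=
        mul_nonneg (inv_nonneg.mpr (sub_nonneg.mpr (rr_lt_one α γ h).le))
          (Real.rpow_nonneg (abs_nonneg x) _)
      linarith
    · rw [abs_of_nonneg (G_nonneg α γ h hx0.le), abs_of_pos hx0]
      exact G_le α γ h hx0
end
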